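/- arXiv:2304.00550 — 10 statements merged into one kernel-verified Lean document; each statement's English description precedes it below -/
import Mathlib

section
/- Let X be a real normed vector space of finite dimension, let x_1,…,x_n be points of X (n ≥ 1), and let x_0 ∈ X satisfy x_0 ≠ x_i for all i = 1,…,n. Then x_0 ∈ ft(x_1,…,x_n) if and only if for each i = 1,…,n there exists a continuous linear functional φ_i on X with ‖φ_i‖ = 1 and φ_i(x_i − x_0) = ‖x_i − x_0‖, such that Σ_{i=1}^n φ_i = 0. -/
/-- The Fermat–Torricelli set of the points `x 0, …, x (n-1)`: the set of points minimizing
the sum of distances to the `x i`. -/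
def ft {X : Type*} [NormedAddCommGroup X] {n : ℕ} (x : Fin n → X) : Set X :=
  {p | ∀ q : X, ∑ i, ‖p - x i‖ ≤ ∑ i, ‖q - x i‖}

set_option maxHeartbeats 1000000 in
theorem ft_point_iff_norming_functionals
    {X : Type*} [NormedAddCommGroup X] [NormedSpace ℝ X] [FiniteDimensional ℝ X]
    {n : ℕ} (hn : 1 ≤ n) (x : Fin n → X) (x₀ : X) (hx₀ : ∀ i, x₀ ≠ x i) :
    x₀ ∈ ft x ↔
      ∃ φ : Fin n → (X →L[ℝ] ℝ),
        (∀ i, ‖φ i‖ = 1 ∧ φ i (x i - x₀) = ‖x i - x₀‖) ∧ ∑ i, φ i = 0 := by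
  haveI : Nontrivial X := ⟨x₀, x ⟨0, hn⟩, hx₀ _⟩
  constructor
  · intro hmin
    set u : Fin n → X := fun i => x₀ - x i with hu
    have hu0 : ∀ i, u i ≠ 0 := fun i => sub_ne_zero.mpr (hx₀ i)
    set N : Fin n → Set (X →L[ℝ] ℝ) := fun i => {φ | ‖φ‖ ≤ 1 ∧ φ (u i) = ‖u i‖} with hN
    set S : Set (X →L[ℝ] ℝ) :=
      (fun ψ : Fin n → (X →L[ℝ] ℝ) => ∑ i, ψ i) '' Set.univ.pi N with hS
    -- basic facts about N
    have hNsub : ∀ i, N i ⊆ Metric.closedBall 0 1 := by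
      intro i φ hφ
      simpa [Metric.mem_closedBall, dist_eq_norm] using hφ.1
    have hNclosed : ∀ i, IsClosed (N i) := by
      intro i
      have h1 : IsClosed {φ : X →L[ℝ] ℝ | ‖φ‖ ≤ 1} :=
        isClosed_le (continuous_norm) continuous_const
      have h2 : IsClosed {φ : X →L[ℝ] ℝ | φ (u i) = ‖u i‖} :=
        isClosed_eq ((NormedSpace.inclusionInDoubleDual ℝ X (u i)).continuous) continuous_const
      exact h1.inter h2
    have hNcompact : ∀ i, IsCompact (N i) := by
      intro i
      exact (isCompact_closedBall (0 : X →L[ℝ] ℝ) 1).of_isClosed_subset (hNclosed i) (hNsub i)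
    have hNconvex : ∀ i, Convex ℝ (N i) := by
      intro i a ha b hb s t hs ht hst
      have h1 := norm_smul (α := ℝ) (β := X →L[ℝ] ℝ) s a
      have h2 := norm_smul (α := ℝ) (β := X →L[ℝ] ℝ) t b
      constructor
      · calc ‖s • a + t • b‖ ≤ ‖s • a‖ + ‖t • b‖ := norm_add_le _ _
          _ = |s| * ‖a‖ + |t| * ‖b‖ := by rw [h1, h2]; rfl
          _ = s * ‖a‖ + t * ‖b‖ := by rw [abs_of_nonneg hs, abs_of_nonneg ht]
          _ ≤ s * 1 + t * 1 := by gcongr; exacts [ha.1, hb.1]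
          _ = 1 := by linarith
      · have happ : (s • a + t • b) (u i) = s * a (u i) + t * b (u i) := rfl
        rw [Set.mem_setOf_eq] at ha hb
        show (s • a + t • b) (u i) = ‖u i‖
        rw [happ, ha.2, hb.2]
        linear_combination ‖u i‖ * hst
    have hSconvex : Convex ℝ S := by
      apply Convex.is_linear_image (convex_pi (fun i _ => hNconvex i))
      exact ⟨fun a b => by simp [Finset.sum_add_distrib], fun c a => by simp [Finset.smul_sum]⟩
    have hScompact : IsCompact S := by
      apply IsCompact.image (isCompact_univ_pi hNcompact)
      exact continuous_finset_sum _ fun i _ => continuous_apply i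
    by_cases h0 : (0 : X →L[ℝ] ℝ) ∈ S
    · obtain ⟨ψ, hψ, hsum⟩ := h0
      refine ⟨fun i => -ψ i, fun i => ?_, by
        simp only [Finset.sum_neg_distrib, neg_eq_zero]
        simpa using hsum⟩
      have hmem := hψ i (Set.mem_univ i)
      have hnorm1 : ‖ψ i‖ = 1 := by
        refine le_antisymm hmem.1 ?_
        have hle : ψ i (u i) ≤ ‖ψ i‖ * ‖u i‖ :=
          le_trans (le_abs_self _) (by simpa [Real.norm_eq_abs] using (ψ i).le_opNorm (u i))
        rw [hmem.2] at hle
        have hpos : 0 < ‖u i‖ := norm_pos_iff.mpr (hu0 i)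
        nlinarith
      refine ⟨by simpa using hnorm1, ?_⟩
      have hx : x i - x₀ = -(u i) := by simp [hu]
      have happ : (-ψ i) (x i - x₀) = ψ i (u i) := by
        rw [ContinuousLinearMap.neg_apply, hx, map_neg, neg_neg]
      rw [happ, hmem.2, hx, norm_neg]
    · exfalso
      -- separate 0 from S
      obtain ⟨f, c, hfS, hc0⟩ :=
        geometric_hahn_banach_closed_point hSconvex hScompact.isClosed h0
      rw [map_zero] at hc0
      have hfneg : ∀ b ∈ S, f b < 0 := fun b hb => (hfS b hb).trans hc0
      -- realize f as evaluation at a vector v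
      set L : Module.Dual ℝ (Module.Dual ℝ X) :=
        f.toLinearMap ∘ₗ
          (LinearMap.toContinuousLinearMap : (X →ₗ[ℝ] ℝ) ≃ₗ[ℝ] X →L[ℝ] ℝ).toLinearMap with hL
      set v : X := (Module.evalEquiv ℝ X).symm L with hv
      have hfv : ∀ ψ : X →L[ℝ] ℝ, f ψ = ψ v := by
        intro ψ
        have h1 : (ψ : X →ₗ[ℝ] ℝ) v = L (ψ : X →ₗ[ℝ] ℝ) :=
          Module.apply_evalEquiv_symm_apply ℝ X _ L
        have h2 : L (ψ : X →ₗ[ℝ] ℝ) = f (LinearMap.toContinuousLinearMap (ψ : X →ₗ[ℝ] ℝ)) := rfl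
        have h3 : LinearMap.toContinuousLinearMap ((ψ : X →ₗ[ℝ] ℝ)) = ψ := by
          apply ContinuousLinearMap.coe_injective
          exact LinearMap.coe_toContinuousLinearMap _
        rw [h2, h3] at h1
        exact h1.symm
      -- the sequence of norming functionals along x₀ + t_k • v
      set t : ℕ → ℝ := fun k => 1 / (k + 1) with ht
      have htpos : ∀ k, 0 < t k := fun k => by positivity
      have htlim : Filter.Tendsto t Filter.atTop (nhds 0) :=
        tendsto_one_div_add_atTop_nhds_zero_nat
      have hΦex : ∀ k i, ∃ g : X →L[ℝ] ℝ, ‖g‖ = 1 ∧ g (u i + t k • v) = ‖u i + t k • v‖ :=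
        fun k i => exists_dual_vector' ℝ (u i + t k • v)
      choose Φ hΦnorm hΦval using hΦex
      have hΦmem : ∀ k, (fun i => Φ k i) ∈ Set.univ.pi fun _ : Fin n =>
          Metric.closedBall (0 : X →L[ℝ] ℝ) 1 := by
        intro k i _
        simp [Metric.mem_closedBall, dist_eq_norm, hΦnorm k i]
      obtain ⟨ψ, hψmem, σ, hσmono, hσlim⟩ :=
        (isCompact_univ_pi fun _ : Fin n => isCompact_closedBall (0 : X →L[ℝ] ℝ) 1).tendsto_subseq
          hΦmem
      -- coordinatewise convergence
      have hcoord : ∀ i, Filter.Tendsto (fun ℓ => Φ (σ ℓ) i) Filter.atTop (nhds (ψ i)) :=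
        fun i => ((continuous_apply i).tendsto ψ).comp hσlim
      have htσ : Filter.Tendsto (fun ℓ => t (σ ℓ)) Filter.atTop (nhds 0) :=
        htlim.comp hσmono.tendsto_atTop
      -- each ψ i is a norming functional of u i
      have hψN : ∀ i, ψ i ∈ N i := by
        intro i
        have hball := hψmem i (Set.mem_univ i)
        constructor
        · simpa [Metric.mem_closedBall, dist_eq_norm] using hball
        · -- ψ i (u i) = ‖u i‖ by a limit argument
          have h1 : Filter.Tendsto (fun ℓ => Φ (σ ℓ) i (u i)) Filter.atTop
              (nhds (ψ i (u i))) :=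
            ((NormedSpace.inclusionInDoubleDual ℝ X (u i)).continuous.tendsto _).comp (hcoord i)
          have h2 : Filter.Tendsto (fun ℓ => Φ (σ ℓ) i (u i)) Filter.atTop (nhds ‖u i‖) := by
            have heq : ∀ ℓ, Φ (σ ℓ) i (u i)
                = ‖u i + t (σ ℓ) • v‖ - t (σ ℓ) * Φ (σ ℓ) i v := by
              intro ℓ
              have := hΦval (σ ℓ) i
              rw [map_add, map_smul] at this
              simp only [smul_eq_mul] at this
              linarith
            rw [show ‖u i‖ = ‖u i + (0:ℝ) • v‖ - 0 by simp]
            have hA : Filter.Tendsto (fun ℓ => ‖u i + t (σ ℓ) • v‖) Filter.atTop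
                (nhds ‖u i + (0:ℝ) • v‖) := by
              apply Filter.Tendsto.norm
              exact tendsto_const_nhds.add (htσ.smul_const v)
            have hB : Filter.Tendsto (fun ℓ => t (σ ℓ) * Φ (σ ℓ) i v) Filter.atTop
                (nhds 0) := by
              apply squeeze_zero_norm (a := fun ℓ => t (σ ℓ) * ‖v‖)
              · intro ℓ
                rw [norm_mul, Real.norm_of_nonneg (htpos (σ ℓ)).le]
                gcongr
                calc ‖Φ (σ ℓ) i v‖ ≤ ‖Φ (σ ℓ) i‖ * ‖v‖ := (Φ (σ ℓ) i).le_opNorm v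
                  _ = ‖v‖ := by rw [hΦnorm]; ring
              · simpa using htσ.mul_const ‖v‖
            simpa [heq] using hA.sub hB
          exact tendsto_nhds_unique h1 h2
      -- Σ ψ i ∈ S
      have hsummem : (∑ i, ψ i) ∈ S := ⟨ψ, fun i _ => hψN i, rfl⟩
      -- but f (Σ ψ i) = Σ ψ i v ≥ 0
      have hge : (0:ℝ) ≤ (∑ i, ψ i) v := by
        have hstep : ∀ ℓ, (0:ℝ) ≤ ∑ i, Φ (σ ℓ) i v := by
          intro ℓ
          have hmin' := hmin (x₀ + t (σ ℓ) • v)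
          have hle : ∀ i, ‖u i + t (σ ℓ) • v‖ ≤ ‖u i‖ + t (σ ℓ) * Φ (σ ℓ) i v := by
            intro i
            have hval := hΦval (σ ℓ) i
            rw [map_add, map_smul] at hval
            simp only [smul_eq_mul] at hval
            have hbd : Φ (σ ℓ) i (u i) ≤ ‖u i‖ := by
              calc Φ (σ ℓ) i (u i) ≤ ‖Φ (σ ℓ) i (u i)‖ := le_abs_self _
                _ ≤ ‖Φ (σ ℓ) i‖ * ‖u i‖ := (Φ (σ ℓ) i).le_opNorm _
                _ = ‖u i‖ := by rw [hΦnorm]; ring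
            linarith
          have hsum1 : ∑ i, ‖u i‖ ≤ ∑ i, ‖u i + t (σ ℓ) • v‖ := by
            have : ∀ i, x₀ + t (σ ℓ) • v - x i = u i + t (σ ℓ) • v := by
              intro i; simp [hu]; abel
            simpa [hu, this] using hmin'
          have hsum2 : ∑ i, ‖u i + t (σ ℓ) • v‖
              ≤ ∑ i, ‖u i‖ + t (σ ℓ) * ∑ i, Φ (σ ℓ) i v := by
            rw [Finset.mul_sum, ← Finset.sum_add_distrib]
            exact Finset.sum_le_sum fun i _ => hle i
          nlinarith [htpos (σ ℓ)]
        have hlim : Filter.Tendsto (fun ℓ => ∑ i, Φ (σ ℓ) i v) Filter.atTop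
            (nhds (∑ i, ψ i v)) := by
          apply tendsto_finset_sum
          intro i _
          exact ((NormedSpace.inclusionInDoubleDual ℝ X v).continuous.tendsto _).comp (hcoord i)
        have := ge_of_tendsto hlim (Filter.Eventually.of_forall hstep)
        simpa using this
      have := hfneg _ hsummem
      rw [hfv] at this
      linarith
  · rintro ⟨φ, hφ, hsum⟩ q
    have key : ∑ i, ‖x₀ - x i‖ = ∑ i, (φ i) (x i - q) := by
      have h1 : ∀ i, (φ i) (x i - q) = (φ i) (x i - x₀) + (φ i) (x₀ - q) := by
        intro i; rw [← map_add]; congr 1; abel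
      rw [Finset.sum_congr rfl fun i _ => h1 i, Finset.sum_add_distrib]
      have h2 : ∑ i, (φ i) (x₀ - q) = (∑ i, φ i) (x₀ - q) := by
        simp [ContinuousLinearMap.sum_apply]
      rw [h2, hsum, ContinuousLinearMap.zero_apply, add_zero]
      rw [Finset.sum_congr rfl fun i _ => (hφ i).2]
      exact Finset.sum_congr rfl fun i _ => norm_sub_rev _ _
    rw [key]
    apply Finset.sum_le_sum
    intro i _
    calc (φ i) (x i - q) ≤ ‖(φ i) (x i - q)‖ := le_abs_self _
      _ ≤ ‖φ i‖ * ‖x i - q‖ := (φ i).le_opNorm _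
      _ = ‖x i - q‖ := by rw [(hφ i).1]; ring
      _ = ‖q - x i‖ := norm_sub_rev _ _
end

section
/- Let X be a real normed vector space of finite dimension, let x_1,…,x_n be points of X (n ≥ 1), and let p ∈ ft(x_1,…,x_n) with p ≠ x_i for all i. Suppose φ_1,…,φ_n are continuous linear functionals with ‖φ_i‖ = 1, φ_i(x_i − p) = ‖x_i − p‖ for each i, and Σ_{i=1}^n φ_i = 0. Then ft(x_1,…,x_n) = ⋂_{i=1}^n C(x_i, φ_i), where C(x, φ) = { x − a : a ∈ X, φ(a) = ‖a‖ }. -/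
/-- The cone `C(x, φ) = { x - a : φ(a) = ‖a‖ }`. -/
def cone {X : Type*} [NormedAddCommGroup X] [NormedSpace ℝ X]
    (x : X) (φ : X →L[ℝ] ℝ) : Set X :=
  {y | ∃ a : X, φ a = ‖a‖ ∧ y = x - a}

theorem ft_eq_iInter_cones
    {X : Type*} [NormedAddCommGroup X] [NormedSpace ℝ X] [FiniteDimensional ℝ X]
    {n : ℕ} (hn : 1 ≤ n) (x : Fin n → X) (p : X)
    (hp : p ∈ ft x) (hpx : ∀ i, p ≠ x i)
    (φ : Fin n → (X →L[ℝ] ℝ))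
    (hφ : ∀ i, ‖φ i‖ = 1 ∧ φ i (x i - p) = ‖x i - p‖)
    (hsum : ∑ i, φ i = 0) :
    ft x = ⋂ i, cone (x i) (φ i) := by
  have key : ∀ (i : Fin n) (v : X), φ i v ≤ ‖v‖ := by
    intro i v
    calc φ i v ≤ ‖φ i v‖ := le_abs_self _
    _ ≤ ‖φ i‖ * ‖v‖ := (φ i).le_opNorm v
    _ = ‖v‖ := by rw [(hφ i).1, one_mul]
  have hzero : ∀ q : X, ∑ i, φ i q = 0 := by
    intro q
    have := congrArg (fun ψ : X →L[ℝ] ℝ => ψ q) hsum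
    simpa using this
  set S := ∑ i, (φ i) (x i) with hS
  have hsumφ : ∀ q : X, ∑ i, φ i (x i - q) = S := by
    intro q
    simp only [map_sub, Finset.sum_sub_distrib, hzero q, sub_zero, hS]
  have hlow : ∀ q : X, S ≤ ∑ i, ‖q - x i‖ := by
    intro q
    rw [← hsumφ q]
    apply Finset.sum_le_sum
    intro i _
    rw [norm_sub_rev]
    exact key i _
  have hfp : ∑ i, ‖p - x i‖ = S := by
    rw [← hsumφ p]
    apply Finset.sum_congr rfl
    intro i _
    rw [norm_sub_rev, (hφ i).2]
  have hmem : ∀ q : X, q ∈ ft x ↔ ∑ i, ‖q - x i‖ = S := by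
    intro q
    constructor
    · intro hq
      exact le_antisymm (hfp ▸ hq p) (hlow q)
    · intro hq r
      rw [hq]
      exact hlow r
  ext q
  rw [hmem q]
  constructor
  · intro hq
    have heq : ∀ i ∈ Finset.univ, φ i (x i - q) = ‖q - x i‖ := by
      rw [← Finset.sum_eq_sum_iff_of_le]
      · rw [hq, hsumφ q]
      · intro i _
        rw [norm_sub_rev]; exact key i _
    simp only [Set.mem_iInter]
    intro i
    exact ⟨x i - q, by rw [heq i (Finset.mem_univ i), norm_sub_rev], by abel⟩
  · intro hq
    simp only [Set.mem_iInter] at hq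
    rw [← hsumφ q]
    apply Finset.sum_congr rfl
    intro i _
    obtain ⟨a, ha, hqa⟩ := hq i
    have : a = x i - q := by rw [hqa]; abel
    rw [norm_sub_rev, ← this, ha]
end

section
/- Let X be a real normed vector space of finite dimension and let x_1,…,x_{2k+1} (k ≥ 0) be points lying on one straight line in the order of their numbering, i.e. x_i = p + t_i • v for some p ∈ X, some nonzero v ∈ X, and real numbers t_1 < t_2 < … < t_{2k+1}. Then ft(x_1,…,x_{2k+1}) = { x_{k+1} }. -/
/-- For `2k+1` points lying on one straight line in the order of their numbering, the
Fermat–Torricelli set is the singleton consisting of the middle point `x_{k+1}`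
(index `k` with 0-based numbering). -/
theorem ft_odd_collinear
    {X : Type*} [NormedAddCommGroup X] [NormedSpace ℝ X] [FiniteDimensional ℝ X]
    {k : ℕ} (x : Fin (2 * k + 1) → X) (p v : X) (hv : v ≠ 0)
    (t : Fin (2 * k + 1) → ℝ) (ht : StrictMono t)
    (hx : ∀ i, x i = p + t i • v) :
    ft x = {x ⟨k, by omega⟩} := by
  have hm : (k : ℕ) < 2 * k + 1 := by omega
  set m : Fin (2 * k + 1) := ⟨k, hm⟩ with hmdef
  have hrevval : ∀ i : Fin (2 * k + 1), (i.rev : ℕ) = 2 * k - i := by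
    intro i; rw [Fin.val_rev]; omega
  have hrevm : m.rev = m := by
    ext; rw [hrevval]; simp [hmdef]; omega
  have hdist : ∀ a b : Fin (2 * k + 1), ‖x a - x b‖ = |t a - t b| * ‖v‖ := by
    intro a b
    have : x a - x b = (t a - t b) • v := by
      rw [hx, hx, sub_smul]; abel
    rw [this, norm_smul, Real.norm_eq_abs]
  -- the middle point lies between x i and x i.rev
  have hA : ∀ i : Fin (2 * k + 1), ‖x m - x i‖ + ‖x m - x i.rev‖ = ‖x i - x i.rev‖ := by
    intro i
    rw [hdist, hdist, hdist]
    rcases le_or_gt (i : ℕ) k with h | h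
    · have h1 : t i ≤ t m := ht.monotone (by simpa [Fin.le_def, hmdef] using h)
      have h2 : t m ≤ t i.rev := ht.monotone (by rw [Fin.le_def, hrevval]; simpa [hmdef] using by omega)
      rw [abs_of_nonneg (by linarith), abs_of_nonpos (by linarith), abs_of_nonpos (by linarith)]
      ring
    · have h1 : t m ≤ t i := ht.monotone (by simp [Fin.le_def, hmdef]; omega)
      have h2 : t i.rev ≤ t m := ht.monotone (by rw [Fin.le_def, hrevval]; simp [hmdef]; omega)
      rw [abs_of_nonpos (by linarith), abs_of_nonneg (by linarith), abs_of_nonneg (by linarith)]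
      ring
  -- triangle inequality for the pair
  have hB : ∀ (q : X) (i : Fin (2 * k + 1)),
      ‖x i - x i.rev‖ ≤ ‖q - x i‖ + ‖q - x i.rev‖ := by
    intro q i
    have he : -(q - x i) + (q - x i.rev) = x i - x i.rev := by abel
    calc ‖x i - x i.rev‖ = ‖-(q - x i) + (q - x i.rev)‖ := by rw [he]
      _ ≤ ‖-(q - x i)‖ + ‖q - x i.rev‖ := norm_add_le _ _
      _ = ‖q - x i‖ + ‖q - x i.rev‖ := by rw [norm_neg]
  have hrevsum : ∀ g : Fin (2 * k + 1) → ℝ, ∑ i : Fin (2 * k + 1), g i.rev = ∑ i, g i := by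
    intro g
    exact Fintype.sum_bijective Fin.rev Fin.rev_bijective _ _ (fun i => rfl)
  -- key inequality
  have key : ∀ q : X, (∑ i, ‖x m - x i‖) + ‖q - x m‖ ≤ ∑ i, ‖q - x i‖ := by
    intro q
    have hDm : ‖x m - x m.rev‖ = 0 := by rw [hrevm]; simp
    have h2m : 2 * ∑ i, ‖x m - x i‖ = ∑ i, ‖x i - x i.rev‖ := by
      rw [two_mul]
      nth_rewrite 2 [← hrevsum (fun i => ‖x m - x i‖)]
      rw [← Finset.sum_add_distrib]
      exact Finset.sum_congr rfl fun i _ => hA i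
    have h2q : 2 * ∑ i, ‖q - x i‖ = ∑ i, (‖q - x i‖ + ‖q - x i.rev‖) := by
      rw [two_mul]
      nth_rewrite 2 [← hrevsum (fun i => ‖q - x i‖)]
      rw [← Finset.sum_add_distrib]
    have hle : ∑ i, (‖x i - x i.rev‖ + (if i = m then 2 * ‖q - x m‖ else 0))
        ≤ ∑ i, (‖q - x i‖ + ‖q - x i.rev‖) := by
      apply Finset.sum_le_sum
      intro i _
      by_cases hi : i = m
      · subst hi
        rw [hDm, hrevm]
        simp; linarith
      · simp [hi]; exact hB q i
    rw [Finset.sum_add_distrib, Finset.sum_ite_eq' Finset.univ m] at hle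
    simp only [Finset.mem_univ, if_true] at hle
    linarith [h2m, h2q, hle]
  ext q
  simp only [ft, Set.mem_setOf_eq, Set.mem_singleton_iff]
  constructor
  · intro hq
    have h1 := hq (x m)
    have h2 := key q
    have h3 : ‖x m - x m‖ = 0 := by simp
    have : ‖q - x m‖ ≤ 0 := by linarith
    have : q - x m = 0 := by
      simpa using le_antisymm this (norm_nonneg _)
    have : q = x m := by rwa [sub_eq_zero] at this
    exact this
  · intro hq r
    subst hq
    have := key r
    have := norm_nonneg (r - x m)
    linarith
end

section
/- Let X be a real normed vector space of finite dimension d and let n ≥ 3 be odd. Then there exist n points x_1,…,x_n in X for which the Fermat–Torricelli set ft(x_1,…,x_n) contains at least two distinct points, if and only if there exist continuous linear functionals φ_1,…,φ_n on X with ‖φ_i‖ = 1 for all i and Σ_{i=1}^n φ_i = 0, such that there is a nonzero vector v ∈ X belonging to the linear span of the face F(φ_i) for every i = 1,…,n. -/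
/-- The face of the unit sphere determined by a norm-one functional `φ`. -/
def face {X : Type*} [NormedAddCommGroup X] [NormedSpace ℝ X] (φ : X →L[ℝ] ℝ) : Set X :=
  {u | ‖u‖ = 1 ∧ φ u = 1}

set_option linter.dupNamespace false

open Pointwise

namespace FTAux

variable {X : Type*} [NormedAddCommGroup X] [NormedSpace ℝ X]

lemma apply_le_norm (φ : X →L[ℝ] ℝ) (hφ : ‖φ‖ ≤ 1) (w : X) : φ w ≤ ‖w‖ :=
  (le_abs_self _).trans <| (φ.le_opNorm w).trans <| by
    nlinarith [norm_nonneg w]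

lemma face_convex (φ : X →L[ℝ] ℝ) (hφ : ‖φ‖ = 1) : Convex ℝ (face φ) := by
  intro u hu v hv c d hc hd hcd
  have h2 : φ (c • u + d • v) = 1 := by
    simp [map_add, map_smul, hu.2, hv.2]; linarith
  refine ⟨le_antisymm ?_ ?_, h2⟩
  · calc ‖c • u + d • v‖ ≤ ‖c • u‖ + ‖d • v‖ := norm_add_le _ _
      _ = c * ‖u‖ + d * ‖v‖ := by
          rw [norm_smul, norm_smul, Real.norm_eq_abs, Real.norm_eq_abs,
            abs_of_nonneg hc, abs_of_nonneg hd]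
      _ = 1 := by rw [hu.1, hv.1]; linarith
  · have := apply_le_norm φ hφ.le (c • u + d • v)
    linarith [h2 ▸ this]

lemma convex_sum_factor {S : Set X} (hS : Convex ℝ S) (Q : Finset X) (hQ : Q.Nonempty)
    (w : X → ℝ) (hw : ∀ j ∈ Q, 0 < w j) (hQS : ∀ j ∈ Q, j ∈ S) :
    ∃ a ∈ S, ∑ j ∈ Q, w j • j = (∑ j ∈ Q, w j) • a := by
  set s := ∑ j ∈ Q, w j with hs_def
  have hs : 0 < s := Finset.sum_pos hw hQ
  refine ⟨s⁻¹ • ∑ j ∈ Q, w j • j, ?_, (smul_inv_smul₀ hs.ne' _).symm⟩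
  have hmem := hS.sum_mem (t := Q) (w := fun j => s⁻¹ * w j) (z := fun j => j)
    (fun j hj => mul_nonneg (inv_nonneg.2 hs.le) (hw j hj).le)
    (by rw [← Finset.mul_sum, inv_mul_cancel₀ hs.ne']) hQS
  rw [Finset.smul_sum]
  convert hmem using 2 with j hj
  rw [smul_smul]

lemma span_rep {S : Set X} (hS : Convex ℝ S) {v : X} (hv : v ≠ 0)
    (h : v ∈ Submodule.span ℝ S) :
    ∃ (s t : ℝ) (a b : X), a ∈ S ∧ b ∈ S ∧ 0 ≤ s ∧ 0 ≤ t ∧ v = s • a - t • b := by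
  classical
  rw [Submodule.mem_span_set] at h
  obtain ⟨c, hsupp, hsum⟩ := h
  set P := c.support.filter (fun j => 0 < c j) with hP
  set N := c.support.filter (fun j => ¬ 0 < c j) with hN
  have hsplit : v = (∑ j ∈ P, c j • j) + ∑ j ∈ N, c j • j := by
    rw [← hsum, Finsupp.sum, ← Finset.sum_filter_add_sum_filter_not c.support (fun j => 0 < c j)]
  have hPS : ∀ j ∈ P, j ∈ S := fun j hj => hsupp (Finset.mem_filter.1 hj).1
  have hNS : ∀ j ∈ N, j ∈ S := fun j hj => hsupp (Finset.mem_filter.1 hj).1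
  have hNneg : ∀ j ∈ N, 0 < -c j := by
    intro j hj
    rcases Finset.mem_filter.1 hj with ⟨hj1, hj2⟩
    have := Finsupp.mem_support_iff.1 hj1
    cases (this.lt_or_gt) with
    | inl h => linarith
    | inr h => exact absurd h hj2
  rcases P.eq_empty_or_nonempty with hPe | hPne
  · rcases N.eq_empty_or_nonempty with hNe | hNne
    · exfalso; apply hv; rw [hsplit, hPe, hNe]; simp
    · obtain ⟨b, hbS, hb⟩ := convex_sum_factor hS N hNne (fun j => -c j) hNneg hNS
      refine ⟨0, ∑ j ∈ N, -c j, b, b, hbS, hbS, le_rfl,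
        Finset.sum_nonneg fun j hj => (hNneg j hj).le, ?_⟩
      have : ∑ j ∈ N, c j • j = -((∑ j ∈ N, -c j) • b) := by
        rw [← hb, ← Finset.sum_neg_distrib]
        simp [neg_smul]
      rw [hsplit, hPe]
      simp [this]
  · obtain ⟨a, haS, ha⟩ := convex_sum_factor hS P hPne (fun j => c j)
      (fun j hj => (Finset.mem_filter.1 hj).2) hPS
    rcases N.eq_empty_or_nonempty with hNe | hNne
    · refine ⟨∑ j ∈ P, c j, 0, a, a, haS, haS,
        Finset.sum_nonneg fun j hj => ((Finset.mem_filter.1 hj).2).le, le_rfl, ?_⟩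
      rw [hsplit, hNe, ha]; simp
    · obtain ⟨b, hbS, hb⟩ := convex_sum_factor hS N hNne (fun j => -c j) hNneg hNS
      refine ⟨∑ j ∈ P, c j, ∑ j ∈ N, -c j, a, b, haS, hbS,
        Finset.sum_nonneg fun j hj => ((Finset.mem_filter.1 hj).2).le,
        Finset.sum_nonneg fun j hj => (hNneg j hj).le, ?_⟩
      have h2 : ∑ j ∈ N, c j • j = -((∑ j ∈ N, -c j) • b) := by
        rw [← hb, ← Finset.sum_neg_distrib]
        simp [neg_smul]
      rw [hsplit, ha, h2, sub_eq_add_neg]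

lemma mem_ft_of_dual {n : ℕ} (x : Fin n → X) (φ : Fin n → X →L[ℝ] ℝ)
    (hnorm : ∀ i, ‖φ i‖ ≤ 1) (hsum : ∑ i, φ i = 0) (p : X)
    (hp : ∀ i, φ i (p - x i) = ‖p - x i‖) : p ∈ ft x := by
  intro q
  have h2 : ∑ i, (φ i) (q - p) = 0 := by
    have := congrArg (fun ψ : X →L[ℝ] ℝ => ψ (q - p)) hsum
    simpa using this
  have h1 : ∑ i, (φ i) (q - x i) = ∑ i, ‖p - x i‖ := by
    have : ∀ i, (φ i) (q - x i) = ‖p - x i‖ + (φ i) (q - p) := by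
      intro i
      have : q - x i = (p - x i) + (q - p) := by abel
      rw [this, map_add, hp i]
    rw [Finset.sum_congr rfl fun i _ => this i, Finset.sum_add_distrib, h2, add_zero]
  calc ∑ i, ‖p - x i‖ = ∑ i, (φ i) (q - x i) := h1.symm
    _ ≤ ∑ i, ‖q - x i‖ := Finset.sum_le_sum fun i _ => apply_le_norm _ (hnorm i) _

end FTAux
namespace FTAux

variable {X : Type*} [NormedAddCommGroup X] [NormedSpace ℝ X]

lemma norm_comb_face (φ : X →L[ℝ] ℝ) (hφ : ‖φ‖ = 1) {u w : X} (hu : u ∈ face φ)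
    (hw : w ∈ face φ) {c d : ℝ} (hc : 0 ≤ c) (hd : 0 ≤ d) :
    φ (c • u + d • w) = ‖c • u + d • w‖ ∧ φ (c • u + d • w) = c + d := by
  have h2 : φ (c • u + d • w) = c + d := by
    simp [map_add, map_smul, hu.2, hw.2]
  refine ⟨?_, h2⟩
  rw [h2]
  refine le_antisymm ?_ ?_
  · have := apply_le_norm φ hφ.le (c • u + d • w)
    linarith [h2 ▸ this]
  · calc ‖c • u + d • w‖ ≤ ‖c • u‖ + ‖d • w‖ := norm_add_le _ _
      _ = c * ‖u‖ + d * ‖w‖ := by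
          rw [norm_smul, norm_smul, Real.norm_eq_abs, Real.norm_eq_abs,
            abs_of_nonneg hc, abs_of_nonneg hd]
      _ = c + d := by rw [hu.1, hw.1]; ring

lemma backward {n : ℕ} (φ : Fin n → X →L[ℝ] ℝ) (hφ : ∀ i, ‖φ i‖ = 1)
    (hsum : ∑ i, φ i = 0) (v : X) (hv : v ≠ 0)
    (hspan : ∀ i, v ∈ Submodule.span ℝ (face (φ i))) :
    ∃ x : Fin n → X, ∃ a ∈ ft x, ∃ b ∈ ft x, a ≠ b := by
  choose s t a b ha hb hs ht hrep using fun i =>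
    span_rep (face_convex (φ i) (hφ i)) hv (hspan i)
  set x : Fin n → X := fun i => -(a i + t i • b i) with hx
  refine ⟨x, 0, ?_, v, ?_, hv.symm⟩
  · apply mem_ft_of_dual x φ (fun i => (hφ i).le) hsum
    intro i
    have h0 : (0 : X) - x i = (1 : ℝ) • a i + t i • b i := by
      simp [hx]
    rw [h0]
    have := norm_comb_face (φ i) (hφ i) (ha i) (hb i) zero_le_one (ht i)
    rw [this.1]
  · apply mem_ft_of_dual x φ (fun i => (hφ i).le) hsum
    intro i
    have h0 : v - x i = (1 + s i) • a i + (0 : ℝ) • b i := by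
      rw [hrep i, hx]
      simp only [smul_eq_mul, zero_smul, add_zero, add_smul, one_smul]
      abel
    rw [h0]
    have := norm_comb_face (φ i) (hφ i) (ha i) (hb i) (c := 1 + s i) (d := 0) (by linarith [hs i]) le_rfl
    rw [this.1]

end FTAux
namespace FTAux

variable {X : Type*} [NormedAddCommGroup X] [NormedSpace ℝ X]

noncomputable def quot (z u : X) (t : ℝ) : ℝ := (‖z + t • u‖ - ‖z‖) / t

noncomputable def dd (z u : X) : ℝ := sInf (quot z u '' Set.Ioi 0)

lemma neg_norm_le_quot (z u : X) {t : ℝ} (ht : 0 < t) : -‖u‖ ≤ quot z u t := by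
  have h1 : ‖z‖ - t * ‖u‖ ≤ ‖z + t • u‖ := by
    have := norm_add_le (z + t • u) (-(t • u))
    simp only [add_neg_cancel_right] at this
    rw [norm_neg, norm_smul, Real.norm_eq_abs, abs_of_pos ht] at this
    linarith
  rw [quot, le_div_iff₀ ht]
  nlinarith

lemma quot_le_norm (z u : X) {t : ℝ} (ht : 0 < t) : quot z u t ≤ ‖u‖ := by
  have h1 : ‖z + t • u‖ ≤ ‖z‖ + t * ‖u‖ := by
    have := norm_add_le z (t • u)
    rw [norm_smul, Real.norm_eq_abs, abs_of_pos ht] at this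
    linarith
  rw [quot, div_le_iff₀ ht]
  nlinarith

lemma quot_nonempty (z u : X) : (quot z u '' Set.Ioi 0).Nonempty :=
  ⟨quot z u 1, 1, Set.mem_Ioi.2 one_pos, rfl⟩

lemma quot_bddBelow (z u : X) : BddBelow (quot z u '' Set.Ioi 0) := by
  refine ⟨-‖u‖, ?_⟩
  rintro r ⟨t, ht, rfl⟩
  exact neg_norm_le_quot z u ht

lemma dd_le_quot (z u : X) {t : ℝ} (ht : 0 < t) : dd z u ≤ quot z u t :=
  csInf_le (quot_bddBelow z u) ⟨t, ht, rfl⟩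

lemma le_dd (z u : X) {c : ℝ} (h : ∀ t, 0 < t → c ≤ quot z u t) : c ≤ dd z u :=
  le_csInf (quot_nonempty z u) (by rintro r ⟨t, ht, rfl⟩; exact h t ht)

lemma dd_le_norm (z u : X) : dd z u ≤ ‖u‖ :=
  (dd_le_quot z u one_pos).trans (quot_le_norm z u one_pos)

lemma neg_norm_le_dd (z u : X) : -‖u‖ ≤ dd z u :=
  le_dd z u fun t ht => neg_norm_le_quot z u ht

lemma dd_zero (z : X) : dd z 0 = 0 := by
  have h : ∀ t : ℝ, 0 < t → quot z 0 t = 0 := by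
    intro t _
    simp [quot]
  refine le_antisymm ?_ (le_dd z 0 fun t ht => (h t ht).ge)
  rw [← h 1 one_pos]
  exact dd_le_quot z 0 one_pos

lemma dd_self (z : X) : dd z z = ‖z‖ := by
  have h : ∀ t : ℝ, 0 < t → quot z z t = ‖z‖ := by
    intro t ht
    rw [quot]
    have heq : z + t • z = (1 + t) • z := by module
    rw [heq, norm_smul, Real.norm_eq_abs, abs_of_pos (by linarith)]
    field_simp
    ring
  refine le_antisymm ?_ (le_dd z z fun t ht => (h t ht).ge)
  rw [← h 1 one_pos]
  exact dd_le_quot z z one_pos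

lemma dd_neg_self (z : X) : dd z (-z) ≤ -‖z‖ := by
  have h : quot z (-z) (1/2) = -‖z‖ := by
    rw [quot]
    have heq : z + (1/2 : ℝ) • (-z) = (1/2 : ℝ) • z := by module
    rw [heq, norm_smul]
    simp
    ring
  rw [← h]
  exact dd_le_quot z (-z) (by norm_num)

lemma quot_mono (z u : X) {s t : ℝ} (hs : 0 < s) (hst : s ≤ t) :
    quot z u s ≤ quot z u t := by
  have ht : 0 < t := lt_of_lt_of_le hs hst
  have hdecomp : t • (z + s • u) = (t - s) • z + s • (z + t • u) := by module
  have hkey : t * ‖z + s • u‖ ≤ (t - s) * ‖z‖ + s * ‖z + t • u‖ := by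
    calc t * ‖z + s • u‖ = ‖t • (z + s • u)‖ := by
          rw [norm_smul, Real.norm_eq_abs, abs_of_pos ht]
      _ = ‖(t - s) • z + s • (z + t • u)‖ := by rw [hdecomp]
      _ ≤ ‖(t - s) • z‖ + ‖s • (z + t • u)‖ := norm_add_le _ _
      _ = (t - s) * ‖z‖ + s * ‖z + t • u‖ := by
          rw [norm_smul, norm_smul, Real.norm_eq_abs, Real.norm_eq_abs,
            abs_of_nonneg (by linarith), abs_of_pos hs]
  rw [quot, quot, div_le_div_iff₀ hs ht]
  nlinarith [hkey]

lemma quot_add_le (z u v : X) {t : ℝ} (ht : 0 < t) :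
    quot z (u + v) (t/2) ≤ quot z u t + quot z v t := by
  have h2 : (0:ℝ) < t/2 := by linarith
  have hdecomp : (2:ℝ) • (z + (t/2) • (u + v)) = (z + t • u) + (z + t • v) := by module
  have hkey : 2 * ‖z + (t/2) • (u + v)‖ ≤ ‖z + t • u‖ + ‖z + t • v‖ := by
    calc 2 * ‖z + (t/2) • (u + v)‖ = ‖(2:ℝ) • (z + (t/2) • (u + v))‖ := by
          rw [norm_smul]; norm_num
      _ = ‖(z + t • u) + (z + t • v)‖ := by rw [hdecomp]
      _ ≤ ‖z + t • u‖ + ‖z + t • v‖ := norm_add_le _ _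
  rw [quot, quot, quot, ← add_div, div_le_div_iff₀ h2 ht]
  nlinarith [hkey]

lemma dd_add_le (z u v : X) : dd z (u + v) ≤ dd z u + dd z v := by
  by_contra h
  push_neg at h
  set ε := dd z (u + v) - (dd z u + dd z v) with hε
  have hε0 : 0 < ε := by linarith
  obtain ⟨ru, ⟨tu, htu, rfl⟩, hqu⟩ := exists_lt_of_csInf_lt (quot_nonempty z u)
    (show sInf _ < dd z u + ε/2 by rw [← dd]; linarith)
  obtain ⟨rv, ⟨tv, htv, rfl⟩, hqv⟩ := exists_lt_of_csInf_lt (quot_nonempty z v)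
    (show sInf _ < dd z v + ε/2 by rw [← dd]; linarith)
  rw [Set.mem_Ioi] at htu htv
  have ht : 0 < min tu tv := lt_min htu htv
  have h1 : quot z u (min tu tv) ≤ quot z u tu := quot_mono z u ht (min_le_left _ _)
  have h2 : quot z v (min tu tv) ≤ quot z v tv := quot_mono z v ht (min_le_right _ _)
  have h3 : dd z (u + v) ≤ quot z (u + v) (min tu tv / 2) := dd_le_quot z _ (by linarith)
  have h4 := quot_add_le z u v ht
  linarith

lemma dd_smul (z u : X) {c : ℝ} (hc : 0 < c) : dd z (c • u) = c * dd z u := by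
  have hq : ∀ t : ℝ, 0 < t → quot z (c • u) t = c * quot z u (t * c) := by
    intro t ht
    rw [quot, quot, smul_smul]
    field_simp
  have himg : quot z (c • u) '' Set.Ioi 0 = c • (quot z u '' Set.Ioi 0) := by
    ext r
    constructor
    · rintro ⟨t, ht, rfl⟩
      rw [Set.mem_Ioi] at ht
      exact ⟨quot z u (t * c), ⟨t * c, Set.mem_Ioi.2 (mul_pos ht hc), rfl⟩,
        (smul_eq_mul (α := ℝ) _ _).trans (hq t ht).symm⟩
    · rintro ⟨r', ⟨t, ht, rfl⟩, rfl⟩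
      rw [Set.mem_Ioi] at ht
      refine ⟨t / c, Set.mem_Ioi.2 (div_pos ht hc), ?_⟩
      rw [hq (t / c) (div_pos ht hc), div_mul_cancel₀ _ hc.ne']
      simp
  rw [dd, himg, Real.sInf_smul_of_nonneg hc.le, dd, smul_eq_mul]

lemma dd_neg_le (z u : X) : -dd z u ≤ dd z (-u) := by
  have := dd_add_le z u (-u)
  rw [add_neg_cancel, dd_zero] at this
  linarith

end FTAux
namespace FTAux

variable {X : Type*} [NormedAddCommGroup X] [NormedSpace ℝ X]

lemma dd_sublinear_bound (z u : X) (c : ℝ) : c * dd z u ≤ dd z (c • u) := by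
  rcases lt_trichotomy c 0 with hc | hc | hc
  · have heq : c • u = (-c) • (-u) := by module
    rw [heq, dd_smul z (-u) (by linarith)]
    have h2 := dd_neg_le z u
    nlinarith
  · simp [hc, dd_zero]
  · rw [dd_smul z u hc]

lemma exists_support_functional (z u : X) (hz : z ≠ 0) :
    ∃ ψ : X →L[ℝ] ℝ, ‖ψ‖ ≤ 1 ∧ ψ z = ‖z‖ ∧ dd z u ≤ ψ u := by
  rcases eq_or_ne u 0 with rfl | hu
  · obtain ⟨ψ, hψ1, hψ2⟩ := exists_dual_vector ℝ z (norm_ne_zero_iff.2 hz)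
    exact ⟨ψ, hψ1.le, hψ2, by simp [dd_zero]⟩
  set f : X →ₗ.[ℝ] ℝ := LinearPMap.mkSpanSingleton u (dd z u) hu with hf
  have hfle : ∀ w : f.domain, f w ≤ dd z (w : X) := by
    intro w
    obtain ⟨c, hc0⟩ : ∃ c : ℝ, c • u = (w : X) := Submodule.mem_span_singleton.1 w.2
    have hc : (w : X) = c • u := hc0.symm
    have hw : w = ⟨c • u, hc ▸ w.2⟩ := Subtype.ext hc
    rw [hc, hw, LinearPMap.mkSpanSingleton'_apply, smul_eq_mul]
    exact dd_sublinear_bound z u c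
  obtain ⟨g, hg_ext, hg_le⟩ := exists_extension_of_le_sublinear f (dd z)
    (fun c hc x => dd_smul z x hc) (fun a b => dd_add_le z a b) hfle
  have hb : ∀ w, ‖g w‖ ≤ 1 * ‖w‖ := by
    intro w
    rw [one_mul, Real.norm_eq_abs, abs_le]
    constructor
    · have := (hg_le (-w)).trans (dd_le_norm z (-w))
      rw [map_neg, norm_neg] at this
      linarith
    · exact (hg_le w).trans (dd_le_norm z w)
  refine ⟨g.mkContinuous 1 hb, (g.mkContinuous_norm_le zero_le_one hb), ?_, ?_⟩
  · show g z = ‖z‖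
    refine le_antisymm ((hg_le z).trans_eq (dd_self z)) ?_
    have h1 := (hg_le (-z)).trans (dd_neg_self z)
    rw [map_neg] at h1
    linarith
  · show dd z u ≤ g u
    have hmem : u ∈ f.domain := by
      rw [hf]
      exact Submodule.mem_span_singleton_self u
    have := hg_ext ⟨u, hmem⟩
    rw [this]
    exact le_of_eq (LinearPMap.mkSpanSingleton_apply ℝ ℝ hu (dd z u)).symm

lemma sum_dd_nonneg {n : ℕ} (hn : 0 < n) (x : Fin n → X) (m : X) (hm : m ∈ ft x) (u : X) :
    0 ≤ ∑ i, dd (m - x i) u := by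
  have hnonempty : Nonempty (Fin n) := ⟨⟨0, hn⟩⟩
  by_contra hcon
  push_neg at hcon
  set ε := -(∑ i, dd (m - x i) u) with hε
  have hε0 : 0 < ε := by simp only [hε]; linarith
  have hεn : (0:ℝ) < ε / n := div_pos hε0 (Nat.cast_pos.2 hn)
  have hchoice : ∀ i, ∃ t, 0 < t ∧ quot (m - x i) u t < dd (m - x i) u + ε / n := by
    intro i
    have hlt : sInf (quot (m - x i) u '' Set.Ioi 0) < dd (m - x i) u + ε / n := by
      rw [← dd]
      linarith
    obtain ⟨r, ⟨t, ht, rfl⟩, hr⟩ := exists_lt_of_csInf_lt (quot_nonempty _ u) hlt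
    exact ⟨t, Set.mem_Ioi.1 ht, hr⟩
  choose t ht hq using hchoice
  have hne : (Finset.univ : Finset (Fin n)).Nonempty := Finset.univ_nonempty
  set T := Finset.univ.inf' hne t with hT
  have hT0 : 0 < T := by
    rw [hT, Finset.lt_inf'_iff]
    exact fun i _ => ht i
  have hmono : ∀ i, quot (m - x i) u T ≤ quot (m - x i) u (t i) := fun i =>
    quot_mono _ u hT0 (Finset.inf'_le t (Finset.mem_univ i))
  have hge : 0 ≤ ∑ i, quot (m - x i) u T := by
    have h1 := hm (m + T • u)
    have h2 : ∀ i, quot (m - x i) u T = (‖m + T • u - x i‖ - ‖m - x i‖) / T := by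
      intro i
      rw [quot]
      have heq : m - x i + T • u = m + T • u - x i := by abel
      rw [heq]
    rw [Finset.sum_congr rfl fun i _ => h2 i, ← Finset.sum_div, Finset.sum_sub_distrib]
    exact div_nonneg (sub_nonneg.2 h1) hT0.le
  have hlt2 : ∑ i, quot (m - x i) u T < 0 := by
    calc ∑ i, quot (m - x i) u T
        ≤ ∑ i, quot (m - x i) u (t i) := Finset.sum_le_sum fun i _ => hmono i
      _ < ∑ i, (dd (m - x i) u + ε / n) := Finset.sum_lt_sum_of_nonempty hne fun i _ => hq i
      _ = ∑ i, dd (m - x i) u + ε := by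
          rw [Finset.sum_add_distrib, Finset.sum_const, Finset.card_univ, Fintype.card_fin,
            nsmul_eq_mul]
          have : (n:ℝ) ≠ 0 := Nat.cast_ne_zero.2 hn.ne'
          field_simp
      _ = 0 := by rw [hε]; ring
  linarith

end FTAux
namespace FTAux

variable {X : Type*} [NormedAddCommGroup X] [NormedSpace ℝ X]

lemma double_dual_surjective [FiniteDimensional ℝ X] :
    Function.Surjective (NormedSpace.inclusionInDoubleDual ℝ X) := by
  have hinj : Function.Injective (NormedSpace.inclusionInDoubleDual ℝ X) := by
    intro a b hab
    rw [NormedSpace.eq_iff_forall_dual_eq ℝ]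
    intro g
    exact congrArg (fun F : StrongDual ℝ (StrongDual ℝ X) => F g) hab
  have h1 : Module.finrank ℝ (StrongDual ℝ X) = Module.finrank ℝ X := by
    rw [← (LinearMap.toContinuousLinearMap :
      (X →ₗ[ℝ] ℝ) ≃ₗ[ℝ] (X →L[ℝ] ℝ)).finrank_eq]
    exact Subspace.dual_finrank_eq
  have h2 : Module.finrank ℝ X = Module.finrank ℝ (StrongDual ℝ (StrongDual ℝ X)) := by
    rw [← ((LinearMap.toContinuousLinearMap :
      (StrongDual ℝ X →ₗ[ℝ] ℝ) ≃ₗ[ℝ] (StrongDual ℝ X →L[ℝ] ℝ))).finrank_eq]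
    rw [Subspace.dual_finrank_eq, h1]
  exact (LinearMap.injective_iff_surjective_of_finrank_eq_finrank h2).1 hinj

lemma exists_dual_family {n : ℕ} [FiniteDimensional ℝ X] (hn : 0 < n) (x : Fin n → X) (m : X)
    (hm : m ∈ ft x) (hz : ∀ i, m - x i ≠ 0) :
    ∃ ψ : Fin n → X →L[ℝ] ℝ,
      (∀ i, ‖ψ i‖ ≤ 1 ∧ ψ i (m - x i) = ‖m - x i‖) ∧ ∑ i, ψ i = 0 := by
  classical
  set F : Fin n → Set (X →L[ℝ] ℝ) :=
    fun i => {ψ | ‖ψ‖ ≤ 1 ∧ ψ (m - x i) = ‖m - x i‖} with hF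
  set K : Set (X →L[ℝ] ℝ) :=
    (fun ψ : Fin n → X →L[ℝ] ℝ => ∑ i, ψ i) '' (Set.univ.pi F) with hK
  have hFclosed : ∀ i, IsClosed (F i) := by
    intro i
    apply IsClosed.inter
    · exact isClosed_le continuous_norm continuous_const
    · exact isClosed_eq ((ContinuousLinearMap.apply ℝ ℝ (m - x i)).continuous) continuous_const
  have hFcompact : ∀ i, IsCompact (F i) := by
    intro i
    refine (isCompact_closedBall (0 : X →L[ℝ] ℝ) 1).of_isClosed_subset (hFclosed i) ?_
    intro ψ hψ
    rw [Metric.mem_closedBall, dist_zero_right]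
    exact hψ.1
  have hKcompact : IsCompact K :=
    (isCompact_univ_pi hFcompact).image (continuous_finset_sum _ fun i _ => continuous_apply i)
  have hKconvex : Convex ℝ K := by
    rintro k1 ⟨ψ1, hψ1, rfl⟩ k2 ⟨ψ2, hψ2, rfl⟩ c d hc hd hcd
    refine ⟨fun i => c • ψ1 i + d • ψ2 i, ?_, ?_⟩
    · intro i _
      have hm1 := hψ1 i (Set.mem_univ i)
      have hm2 := hψ2 i (Set.mem_univ i)
      constructor
      · refine ContinuousLinearMap.opNorm_le_bound _ zero_le_one ?_
        intro w
        rw [one_mul, ContinuousLinearMap.add_apply, ContinuousLinearMap.smul_apply,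
          ContinuousLinearMap.smul_apply, smul_eq_mul, smul_eq_mul, Real.norm_eq_abs]
        have b1 : |(ψ1 i) w| ≤ ‖w‖ := by
          rw [← Real.norm_eq_abs]
          exact ((ψ1 i).le_opNorm w).trans (by nlinarith [hm1.1, norm_nonneg w])
        have b2 : |(ψ2 i) w| ≤ ‖w‖ := by
          rw [← Real.norm_eq_abs]
          exact ((ψ2 i).le_opNorm w).trans (by nlinarith [hm2.1, norm_nonneg w])
        calc |c * (ψ1 i) w + d * (ψ2 i) w| ≤ |c * (ψ1 i) w| + |d * (ψ2 i) w| := abs_add_le _ _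
          _ = c * |(ψ1 i) w| + d * |(ψ2 i) w| := by
              rw [abs_mul, abs_mul, abs_of_nonneg hc, abs_of_nonneg hd]
          _ ≤ c * ‖w‖ + d * ‖w‖ := by gcongr
          _ = ‖w‖ := by rw [← add_mul, hcd, one_mul]
      · have heval : (c • ψ1 i + d • ψ2 i) (m - x i) = c * ‖m - x i‖ + d * ‖m - x i‖ := by
          rw [ContinuousLinearMap.add_apply, ContinuousLinearMap.smul_apply,
            ContinuousLinearMap.smul_apply, hm1.2, hm2.2, smul_eq_mul, smul_eq_mul]
        rw [heval, ← add_mul, hcd, one_mul]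
    · show ∑ i, (c • ψ1 i + d • ψ2 i) = c • ∑ i, ψ1 i + d • ∑ i, ψ2 i
      rw [Finset.sum_add_distrib, ← Finset.smul_sum, ← Finset.smul_sum]
  have h0K : (0 : X →L[ℝ] ℝ) ∈ K := by
    by_contra h0
    obtain ⟨f, u, hfK, hf0⟩ :=
      geometric_hahn_banach_closed_point (E := X →L[ℝ] ℝ) hKconvex hKcompact.isClosed h0
    rw [map_zero] at hf0
    obtain ⟨w, hw⟩ := double_dual_surjective (X := X) f
    have hψex : ∀ i, ∃ ψ : X →L[ℝ] ℝ, ψ ∈ F i ∧ dd (m - x i) w ≤ ψ w := by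
      intro i
      obtain ⟨ψ, h1, h2, h3⟩ := exists_support_functional (m - x i) w (hz i)
      exact ⟨ψ, ⟨h1, h2⟩, h3⟩
    choose ψ hψF hψw using hψex
    have hsumK : (∑ i, ψ i) ∈ K := ⟨ψ, fun i _ => hψF i, rfl⟩
    have hlt := hfK _ hsumK
    have heval : f (∑ i, ψ i) = ∑ i, ψ i w := by
      rw [← hw]
      simp [NormedSpace.inclusionInDoubleDual]
    have hge : 0 ≤ ∑ i, ψ i w := by
      have h1 := sum_dd_nonneg hn x m hm w
      have h2 : ∑ i, dd (m - x i) w ≤ ∑ i, ψ i w :=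
        Finset.sum_le_sum fun i _ => hψw i
      linarith
    rw [heval] at hlt
    linarith
  obtain ⟨ψ, hψ, hψ0⟩ := h0K
  exact ⟨ψ, fun i => hψ i (Set.mem_univ i), hψ0⟩

end FTAux
namespace FTAux

variable {X : Type*} [NormedAddCommGroup X] [NormedSpace ℝ X]

lemma span_of_support {ψ : X →L[ℝ] ℝ} (hψ : ‖ψ‖ ≤ 1) {w : X} (hw : w ≠ 0)
    (h : ψ w = ‖w‖) : w ∈ Submodule.span ℝ (face ψ) := by
  have hwn : (0:ℝ) < ‖w‖ := norm_pos_iff.2 hw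
  have hface : ‖w‖⁻¹ • w ∈ face ψ := by
    constructor
    · rw [norm_smul, Real.norm_eq_abs, abs_of_pos (inv_pos.2 hwn), inv_mul_cancel₀ hwn.ne']
    · rw [map_smul, h, smul_eq_mul, inv_mul_cancel₀ hwn.ne']
  have heq : w = ‖w‖ • (‖w‖⁻¹ • w) := by
    rw [smul_smul, mul_inv_cancel₀ hwn.ne', one_smul]
  rw [heq]
  exact Submodule.smul_mem _ _ (Submodule.subset_span hface)

lemma forward {n : ℕ} [FiniteDimensional ℝ X] (hn : 0 < n)
    (x : Fin n → X) (a b : X) (ha : a ∈ ft x) (hb : b ∈ ft x) (hab : a ≠ b) :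
    ∃ φ : Fin n → (X →L[ℝ] ℝ), (∀ i, ‖φ i‖ = 1) ∧ ∑ i, φ i = 0 ∧
      ∃ v : X, v ≠ 0 ∧ ∀ i, v ∈ Submodule.span ℝ (face (φ i)) := by
  classical
  have hba : b - a ≠ 0 := sub_ne_zero.2 (Ne.symm hab)
  have hbad : (Set.Ioo (0:ℝ) 1 \ ⋃ i, {t : ℝ | a + t • (b - a) = x i}).Nonempty := by
    refine Set.Infinite.nonempty (Set.Infinite.diff (Set.Ioo_infinite one_pos) ?_)
    refine Set.finite_iUnion fun i => Set.Subsingleton.finite ?_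
    intro t1 h1 t2 h2
    have heq : t1 • (b - a) = t2 • (b - a) := by
      have h3 : a + t1 • (b - a) = a + t2 • (b - a) := h1.trans h2.symm
      exact add_left_cancel h3
    exact smul_left_injective ℝ hba heq
  obtain ⟨t, htIoo, htnot⟩ := hbad
  set m := a + t • (b - a) with hm_def
  have hz : ∀ i, m - x i ≠ 0 := by
    intro i h
    exact htnot (Set.mem_iUnion.2 ⟨i, sub_eq_zero.1 h⟩)
  have hfab : ∑ i, ‖a - x i‖ = ∑ i, ‖b - x i‖ := le_antisymm (ha b) (hb a)
  have hmle : ∀ i, ‖m - x i‖ ≤ (1 - t) * ‖a - x i‖ + t * ‖b - x i‖ := by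
    intro i
    have hdecomp : m - x i = (1 - t) • (a - x i) + t • (b - x i) := by
      rw [hm_def]; module
    rw [hdecomp]
    calc ‖(1 - t) • (a - x i) + t • (b - x i)‖
        ≤ ‖(1 - t) • (a - x i)‖ + ‖t • (b - x i)‖ := norm_add_le _ _
      _ = (1 - t) * ‖a - x i‖ + t * ‖b - x i‖ := by
          rw [norm_smul, norm_smul, Real.norm_eq_abs, Real.norm_eq_abs,
            abs_of_nonneg (by linarith [htIoo.2]), abs_of_nonneg htIoo.1.le]
  have hsum_m_le : ∑ i, ‖m - x i‖ ≤ ∑ i, ‖a - x i‖ := by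
    calc ∑ i, ‖m - x i‖
        ≤ ∑ i, ((1 - t) * ‖a - x i‖ + t * ‖b - x i‖) :=
          Finset.sum_le_sum fun i _ => hmle i
      _ = (1 - t) * ∑ i, ‖a - x i‖ + t * ∑ i, ‖b - x i‖ := by
          rw [Finset.sum_add_distrib, Finset.mul_sum, Finset.mul_sum]
      _ = ∑ i, ‖a - x i‖ := by rw [← hfab]; ring
  have hmft : m ∈ ft x := fun q => hsum_m_le.trans (ha q)
  have hfm : ∑ i, ‖m - x i‖ = ∑ i, ‖a - x i‖ := le_antisymm hsum_m_le (ha m)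
  obtain ⟨ψ, hψprop, hψsum⟩ := exists_dual_family hn x m hmft hz
  have hψ1 : ∀ i, ‖ψ i‖ = 1 := by
    intro i
    refine le_antisymm (hψprop i).1 ?_
    have h1 : ‖m - x i‖ ≤ ‖ψ i‖ * ‖m - x i‖ := by
      conv_lhs => rw [← (hψprop i).2]
      exact (le_abs_self _).trans (by rw [← Real.norm_eq_abs]; exact (ψ i).le_opNorm _)
    have h2 : 0 < ‖m - x i‖ := norm_pos_iff.2 (hz i)
    nlinarith
  have hsum_eval : ∑ i, (ψ i) (b - x i) = ∑ i, ‖b - x i‖ := by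
    have e1 : ∀ i : Fin n, (ψ i) (b - x i) = (ψ i) (m - x i) + (ψ i) (b - m) := by
      intro i
      rw [← map_add]
      congr 1
      abel
    have e2 : ∑ i, (ψ i) (b - m) = 0 := by
      have := congrArg (fun F : X →L[ℝ] ℝ => F (b - m)) hψsum
      simpa using this
    calc ∑ i, (ψ i) (b - x i)
        = ∑ i, ((ψ i) (m - x i) + (ψ i) (b - m)) := Finset.sum_congr rfl fun i _ => e1 i
      _ = ∑ i, (ψ i) (m - x i) + ∑ i, (ψ i) (b - m) := Finset.sum_add_distrib
      _ = ∑ i, ‖m - x i‖ + 0 := by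
          rw [e2]
          congr 1
          exact Finset.sum_congr rfl fun i _ => (hψprop i).2
      _ = ∑ i, ‖b - x i‖ := by rw [hfm, hfab, add_zero]
  have hsupp_b : ∀ i, (ψ i) (b - x i) = ‖b - x i‖ := by
    have hδ : ∀ j ∈ Finset.univ, (0:ℝ) ≤ ‖b - x j‖ - (ψ j) (b - x j) := fun j _ =>
      sub_nonneg.2 (apply_le_norm _ (hψprop j).1 _)
    have hδ0 : ∑ j, (‖b - x j‖ - (ψ j) (b - x j)) = 0 := by
      rw [Finset.sum_sub_distrib, hsum_eval]
      ring
    intro i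
    have := (Finset.sum_eq_zero_iff_of_nonneg hδ).1 hδ0 i (Finset.mem_univ i)
    linarith
  refine ⟨ψ, hψ1, hψsum, b - a, hba, ?_⟩
  intro i
  have hmem_m : m - x i ∈ Submodule.span ℝ (face (ψ i)) :=
    span_of_support (hψprop i).1 (hz i) (hψprop i).2
  rcases eq_or_ne b (x i) with hbx | hbx
  · have h1 : m - x i = (t - 1) • (b - a) := by rw [hm_def, ← hbx]; module
    have ht1 : t - 1 ≠ 0 := sub_ne_zero.2 htIoo.2.ne
    have h2 : b - a = (t - 1)⁻¹ • (m - x i) := by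
      rw [h1, smul_smul, inv_mul_cancel₀ ht1, one_smul]
    rw [h2]
    exact Submodule.smul_mem _ _ hmem_m
  · have hmem_b : b - x i ∈ Submodule.span ℝ (face (ψ i)) :=
      span_of_support (hψprop i).1 (sub_ne_zero.2 hbx) (hsupp_b i)
    have h2 : (b - x i) - (m - x i) = (1 - t) • (b - a) := by rw [hm_def]; module
    have h1t : (1:ℝ) - t ≠ 0 := sub_ne_zero.2 htIoo.2.ne'
    have h3 : b - a = (1 - t)⁻¹ • ((b - x i) - (m - x i)) := by
      rw [h2, smul_smul, inv_mul_cancel₀ h1t, one_smul]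
    rw [h3]
    exact Submodule.smul_mem _ _ (Submodule.sub_mem _ hmem_b hmem_m)

end FTAux

/-- Criterion for non-uniqueness: for odd `n ≥ 3`, there exist `n` points whose
Fermat–Torricelli set is non-unique iff there is a consistent set of `n` faces of the
unit sphere whose linear spans all contain a common line. -/
theorem nonunique_ft_iff_consistent_faces
    {X : Type*} [NormedAddCommGroup X] [NormedSpace ℝ X] [FiniteDimensional ℝ X]
    {n : ℕ} (hn : 3 ≤ n) (hodd : Odd n) :
    (∃ x : Fin n → X, ∃ a ∈ ft x, ∃ b ∈ ft x, a ≠ b) ↔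
      ∃ φ : Fin n → (X →L[ℝ] ℝ),
        (∀ i, ‖φ i‖ = 1) ∧ ∑ i, φ i = 0 ∧
        ∃ v : X, v ≠ 0 ∧ ∀ i, v ∈ Submodule.span ℝ (face (φ i)) := by
  constructor
  · rintro ⟨x, a, ha, b, hb, hab⟩
    exact FTAux.forward (by omega) x a b ha hb hab
  · rintro ⟨φ, hφ, hsum, v, hv, hspan⟩
    exact FTAux.backward φ hφ hsum v hv hspan
end

section
/- Let X be a real normed vector space of finite dimension at least 2 and let n ≥ 4 be even. Then the following are equivalent: (1) for every choice of n points x_1,…,x_n in X that do not all lie on one straight line, the Fermat–Torricelli set ft(x_1,…,x_n) is a single point; (2) the norm of X is strictly convex. -/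
private lemma ft_signsum {n : ℕ} (heven : Even n) :
    ∑ i ∈ Finset.Ico 2 n, ((-1:ℝ))^i = 0 := by
  rcases le_or_gt 2 n with h | h
  · rw [Finset.sum_Ico_eq_sub _ h,
      geom_sum_eq (by norm_num : (-1:ℝ) ≠ 1), geom_sum_eq (by norm_num : (-1:ℝ) ≠ 1),
      heven.neg_one_pow]
    norm_num
  · rw [Finset.Ico_eq_empty (by omega)]; simp

private lemma ft_exists {X : Type*} [NormedAddCommGroup X] [NormedSpace ℝ X]
    [FiniteDimensional ℝ X] {n : ℕ} (hn : 0 < n) (x : Fin n → X) :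
    ∃ p : X, p ∈ ft x := by
  set g : X → ℝ := fun p => ∑ i, ‖p - x i‖ with hg
  have hcont : Continuous g := by
    apply continuous_finset_sum
    intro i _
    exact (continuous_id.sub continuous_const).norm
  set C : ℝ := ∑ i, ‖x i‖ with hC
  have hC0 : 0 ≤ C := Finset.sum_nonneg fun i _ => norm_nonneg _
  have hg0 : g 0 = C := by simp [hg, hC]
  obtain ⟨p₀, hp₀mem, hp₀⟩ := (isCompact_closedBall (0:X) (2*C+1)).exists_isMinOn
    ⟨0, by simp [Metric.mem_closedBall]; positivity⟩ hcont.continuousOn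
  refine ⟨p₀, fun q => ?_⟩
  by_cases hq : q ∈ Metric.closedBall (0:X) (2*C+1)
  · exact hp₀ hq
  · have hqn : 2*C+1 < ‖q‖ := by
      simpa [Metric.mem_closedBall, dist_zero_right] using hq
    have h1 : g p₀ ≤ C := hg0 ▸ hp₀ (by simp [Metric.mem_closedBall]; positivity)
    have h2 : ‖q‖ - C ≤ g q := by
      have : ∑ i, (‖q‖/n - ‖x i‖) ≤ g q := by
        apply Finset.sum_le_sum
        intro i _
        have := norm_sub_norm_le q (x i)
        have hqn' : ‖q‖/n ≤ ‖q‖ := by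
          apply div_le_self (norm_nonneg _)
          exact_mod_cast hn
        linarith
      have hne : (n:ℝ) ≠ 0 := by positivity
      have h3 : (n:ℝ) * (‖q‖/n) = ‖q‖ := by field_simp
      rw [Finset.sum_sub_distrib, Finset.sum_const, Finset.card_univ, Fintype.card_fin,
        nsmul_eq_mul, h3] at this
      linarith [this]
    show g p₀ ≤ g q
    linarith

private lemma ft_unique {X : Type*} [NormedAddCommGroup X] [NormedSpace ℝ X]
    [StrictConvexSpace ℝ X] {n : ℕ} (x : Fin n → X) (hcol : ¬ Collinear ℝ (Set.range x))
    {p q : X} (hp : p ∈ ft x) (hq : q ∈ ft x) : p = q := by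
  by_contra hne
  have hmin : ∑ i, ‖p - x i‖ = ∑ i, ‖q - x i‖ := le_antisymm (hp q) (hq p)
  have key : ∀ i, SameRay ℝ (p - x i) (q - x i) := by
    by_contra hk
    push_neg at hk
    obtain ⟨i₀, hi₀⟩ := hk
    set m : X := (1/2 : ℝ) • (p + q) with hm
    have hterm : ∀ i, ‖m - x i‖ ≤ (1/2) * (‖p - x i‖ + ‖q - x i‖) := by
      intro i
      have : m - x i = (1/2 : ℝ) • ((p - x i) + (q - x i)) := by
        rw [hm]; module
      rw [this, norm_smul]
      have h12 : ‖(1/2 : ℝ)‖ = 1/2 := by rw [Real.norm_eq_abs]; norm_num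
      rw [h12]
      have := norm_add_le (p - x i) (q - x i)
      nlinarith [norm_nonneg ((p - x i) + (q - x i))]
    have hstrict : ‖m - x i₀‖ < (1/2) * (‖p - x i₀‖ + ‖q - x i₀‖) := by
      have : m - x i₀ = (1/2 : ℝ) • ((p - x i₀) + (q - x i₀)) := by
        rw [hm]; module
      rw [this, norm_smul]
      have h12 : ‖(1/2 : ℝ)‖ = 1/2 := by rw [Real.norm_eq_abs]; norm_num
      rw [h12]
      have := norm_add_lt_of_not_sameRay hi₀
      nlinarith [norm_nonneg ((p - x i₀) + (q - x i₀))]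
    have hlt : ∑ i, ‖m - x i‖ < ∑ i, (1/2) * (‖p - x i‖ + ‖q - x i‖) :=
      Finset.sum_lt_sum (fun i _ => hterm i) ⟨i₀, Finset.mem_univ _, hstrict⟩
    have : ∑ i, (1/2 : ℝ) * (‖p - x i‖ + ‖q - x i‖) = ∑ i, ‖p - x i‖ := by
      rw [← Finset.mul_sum, Finset.sum_add_distrib, ← hmin]; ring
    rw [this] at hlt
    exact absurd (hp m) (not_le.mpr hlt)
  apply hcol
  rw [collinear_iff_exists_forall_eq_smul_vadd]
  refine ⟨p, q - p, ?_⟩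
  rintro _ ⟨i, rfl⟩
  rcases key i with h0 | h0 | ⟨r, s, hr, hs, hrs⟩
  · exact ⟨0, by rw [sub_eq_zero] at h0; simp [← h0]⟩
  · exact ⟨1, by rw [sub_eq_zero] at h0; simp [← h0]⟩
  · have hsr : s - r ≠ 0 := by
      intro h
      have : s = r := by linarith [sub_eq_zero.mp h]
      apply hne
      rw [this] at hrs
      have := smul_right_injective X (ne_of_gt hr) hrs
      have h2 : p - x i = q - x i := this
      exact sub_left_injective h2
    refine ⟨s / (s - r), ?_⟩
    have goal2 : (s - r) • (x i) = s • q - r • p := by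
      rw [smul_sub, smul_sub] at hrs
      rw [sub_smul]
      linear_combination (norm := module) hrs
    have : x i = (s - r)⁻¹ • (s • q - r • p) := by
      rw [← goal2, inv_smul_smul₀ hsr]
    rw [this]
    rw [vadd_eq_add]
    rw [div_eq_mul_inv]
    match_scalars <;> (field_simp; try ring)

set_option maxHeartbeats 2000000 in
/-- For even `n ≥ 4`, the Fermat–Torricelli set is a single point for any `n` points not
all on one straight line iff the norm is strictly convex. -/
theorem ft_unique_even_iff_strictConvex
    {X : Type*} [NormedAddCommGroup X] [NormedSpace ℝ X] [FiniteDimensional ℝ X]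
    (hd : 2 ≤ Module.finrank ℝ X)
    {n : ℕ} (hn : 4 ≤ n) (heven : Even n) :
    (∀ x : Fin n → X, ¬ Collinear ℝ (Set.range x) → ∃ p : X, ft x = {p}) ↔
      StrictConvexSpace ℝ X := by
  constructor
  · -- unique FT points ⟹ strictly convex
    intro H
    apply StrictConvexSpace.of_norm_add
    intro u v hu hv huv
    by_contra hray
    set m : X := (1/2 : ℝ) • (u + v) with hm
    set d : X := (1/2 : ℝ) • (v - u) with hd'
    have hune : u ≠ v := fun h => hray (h ▸ SameRay.refl u)
    have hd0 : d ≠ 0 := by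
      rw [hd']
      simp only [ne_eq, smul_eq_zero, sub_eq_zero]
      push_neg
      exact ⟨by norm_num, fun h => hune h.symm⟩
    have hmd : m - d = u := by rw [hm, hd']; module
    have hmd' : m + d = v := by rw [hm, hd']; module
    have hnm : ‖m‖ = 1 := by
      rw [hm, norm_smul, Real.norm_eq_abs, huv, abs_of_pos (by norm_num : (0:ℝ) < 1/2)]
      norm_num
    have hm0 : m ≠ 0 := by intro h; rw [h] at hnm; simp at hnm
    have h1 : ‖m - d‖ = 1 := by rw [hmd]; exact hu
    have h2 : ‖m + d‖ = 1 := by rw [hmd']; exact hv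
    obtain ⟨φ, hφn, hφm⟩ := exists_dual_vector ℝ m (norm_ne_zero_iff.mpr hm0)
    rw [hnm] at hφm
    obtain ⟨ψ, hψn, hψd⟩ := exists_dual_vector ℝ d (norm_ne_zero_iff.mpr hd0)
    have hbound : ∀ (f : X →L[ℝ] ℝ) (y : X), ‖f‖ = 1 → f y ≤ ‖y‖ := by
      intro f y hf
      calc f y ≤ |f y| := le_abs_self _
      _ ≤ ‖f‖ * ‖y‖ := by rw [← Real.norm_eq_abs]; exact f.le_opNorm y
      _ = ‖y‖ := by rw [hf, one_mul]
    have hφm' : φ m = 1 := by exact_mod_cast hφm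
    have hψd' : ψ d = ‖d‖ := by exact_mod_cast hψd
    have hφd : φ d = 0 := by
      have hA := hbound φ (m - d) hφn
      have hB := hbound φ (m + d) hφn
      rw [h1, map_sub, hφm'] at hA
      rw [h2, map_add, hφm'] at hB
      linarith
    set x : Fin n → X := fun i => (-1:ℝ)^(i:ℕ) • (if (i:ℕ) < 2 then m else (2:ℝ) • d) with hx
    set Φ : Fin n → X → ℝ := fun i y => (-1:ℝ)^(i:ℕ) * (if (i:ℕ) < 2 then φ y else ψ y) with hΦ
    -- the functionals sum to zero
    have hsum0 : ∀ y : X, ∑ i, Φ i y = 0 := by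
      intro y
      rw [Fin.sum_univ_eq_sum_range (fun i => (-1:ℝ)^i * (if i < 2 then φ y else ψ y))]
      rw [Finset.range_eq_Ico, ← Finset.sum_Ico_consecutive _ (by omega : 0 ≤ 2) (by omega : 2 ≤ n)]
      have e1 : ∑ i ∈ Finset.Ico 0 2, (-1:ℝ)^i * (if i < 2 then φ y else ψ y) = 0 := by
        rw [← Finset.range_eq_Ico]
        simp [Finset.sum_range_succ]
      have e2 : ∑ i ∈ Finset.Ico 2 n, (-1:ℝ)^i * (if i < 2 then φ y else ψ y) = 0 := by
        have hcg : ∀ i ∈ Finset.Ico 2 n,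
            (-1:ℝ)^i * (if i < 2 then φ y else ψ y) = (-1:ℝ)^i * ψ y := by
          intro i hi
          simp only [Finset.mem_Ico] at hi
          rw [if_neg (by omega)]
        rw [Finset.sum_congr rfl hcg, ← Finset.sum_mul, ft_signsum heven, zero_mul]
      rw [e1, e2, add_zero]
    -- termwise bound: Φ i (x i - q) ≤ ‖q - x i‖
    have hb : ∀ (i : Fin n) (q : X), Φ i (x i - q) ≤ ‖q - x i‖ := by
      intro i q
      rw [hΦ]
      simp only
      rcases Nat.even_or_odd (i:ℕ) with hpar | hpar
      · rw [hpar.neg_one_pow, one_mul, norm_sub_rev]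
        split
        · exact hbound φ _ hφn
        · exact hbound ψ _ hψn
      · rw [hpar.neg_one_pow, neg_one_mul, norm_sub_rev]
        split
        · calc -(φ (x i - q)) = φ (-(x i - q)) := by rw [map_neg]
            _ ≤ ‖-(x i - q)‖ := hbound φ _ hφn
            _ = ‖x i - q‖ := norm_neg _
        · calc -(ψ (x i - q)) = ψ (-(x i - q)) := by rw [map_neg]
            _ ≤ ‖-(x i - q)‖ := hbound ψ _ hψn
            _ = ‖x i - q‖ := norm_neg _
    -- lower bound for all q
    have hlower : ∀ q : X, ∑ i, Φ i (x i) ≤ ∑ i, ‖q - x i‖ := by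
      intro q
      have hle : ∑ i, Φ i (x i - q) ≤ ∑ i, ‖q - x i‖ := Finset.sum_le_sum (fun i _ => hb i q)
      have hsplit : ∑ i, Φ i (x i - q) = ∑ i, Φ i (x i) - ∑ i, Φ i q := by
        rw [← Finset.sum_sub_distrib]
        apply Finset.sum_congr rfl
        intro i _
        rw [hΦ]
        simp only
        split <;> rw [map_sub] <;> ring
      rw [hsplit, hsum0, sub_zero] at hle
      exact hle
    -- 0 is a Fermat–Torricelli point
    have h0ft : (0 : X) ∈ ft x := by
      intro q
      have he : ∑ i, ‖(0:X) - x i‖ = ∑ i, Φ i (x i) := by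
        apply Finset.sum_congr rfl
        intro i _
        rw [hΦ, hx]
        simp only
        rw [zero_sub, norm_neg, norm_smul]
        have habs : ‖((-1:ℝ))^(i:ℕ)‖ = 1 := by
          rw [norm_pow, norm_neg, norm_one, one_pow]
        rw [habs, one_mul]
        have hsq : ((-1:ℝ))^(i:ℕ) * ((-1:ℝ))^(i:ℕ) = 1 := by
          rw [← pow_add]
          exact Even.neg_one_pow ⟨(i:ℕ), rfl⟩
        split
        · rw [hnm, map_smul, smul_eq_mul, ← mul_assoc, hsq, one_mul, hφm']
        · rw [map_smul, smul_eq_mul, ← mul_assoc, hsq, one_mul, map_smul, smul_eq_mul, hψd',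
            norm_smul, Real.norm_eq_abs, abs_of_pos (by norm_num : (0:ℝ) < 2)]
      rw [he]
      exact hlower q
    -- d is a Fermat–Torricelli point
    have hdft : d ∈ ft x := by
      intro q
      have he : ∑ i, ‖d - x i‖ = ∑ i, Φ i (x i - d) := by
        apply Finset.sum_congr rfl
        intro i _
        rw [hΦ, hx]
        simp only
        rcases Nat.even_or_odd (i:ℕ) with hpar | hpar <;>
          rw [hpar.neg_one_pow] <;> by_cases hlt : (i:ℕ) < 2
        · rw [if_pos hlt, if_pos hlt, one_smul, one_mul, norm_sub_rev, h1, map_sub, hφm', hφd]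
          norm_num
        · rw [if_neg hlt, if_neg hlt, one_smul, one_mul, map_sub, map_smul, smul_eq_mul, hψd']
          have hv1 : d - (2:ℝ) • d = -d := by module
          rw [hv1, norm_neg]
          ring
        · rw [if_pos hlt, if_pos hlt, neg_one_smul, neg_one_mul, map_sub, map_neg, hφm', hφd]
          have hv1 : d - -m = m + d := by module
          rw [hv1, h2]
          norm_num
        · rw [if_neg hlt, if_neg hlt, neg_one_smul, neg_one_mul, map_sub, map_neg, map_smul,
            smul_eq_mul, hψd']
          have hv1 : d - -((2:ℝ) • d) = (3:ℝ) • d := by module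
          rw [hv1, norm_smul, Real.norm_eq_abs, abs_of_pos (by norm_num : (0:ℝ) < 3)]
          ring
      have hsplit : ∑ i, Φ i (x i - d) = ∑ i, Φ i (x i) - ∑ i, Φ i d := by
        rw [← Finset.sum_sub_distrib]
        apply Finset.sum_congr rfl
        intro i _
        rw [hΦ]
        simp only
        split <;> rw [map_sub] <;> ring
      rw [he, hsplit, hsum0, sub_zero]
      exact hlower q
    -- the points are not collinear
    have hncol : ¬ Collinear ℝ (Set.range x) := by
      intro hc
      rw [collinear_iff_exists_forall_eq_smul_vadd] at hc
      obtain ⟨p₀, w, hw⟩ := hc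
      have hx0 : x ⟨0, by omega⟩ = m := by rw [hx]; norm_num
      have hx1 : x ⟨1, by omega⟩ = -m := by rw [hx]; norm_num
      have hx2 : x ⟨2, by omega⟩ = (2:ℝ) • d := by rw [hx]; norm_num
      have hx3 : x ⟨3, by omega⟩ = -((2:ℝ) • d) := by rw [hx]; norm_num
      obtain ⟨c0, hc0⟩ := hw m ⟨⟨0, by omega⟩, hx0⟩
      obtain ⟨c1, hc1⟩ := hw (-m) ⟨⟨1, by omega⟩, hx1⟩
      obtain ⟨c2, hc2⟩ := hw ((2:ℝ) • d) ⟨⟨2, by omega⟩, hx2⟩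
      obtain ⟨c3, hc3⟩ := hw (-((2:ℝ) • d)) ⟨⟨3, by omega⟩, hx3⟩
      rw [vadd_eq_add] at hc0 hc1 hc2 hc3
      have ha : (2:ℝ) • m = (c0 - c1) • w := by
        rw [sub_smul]
        linear_combination (norm := module) hc0 - hc1
      have hbw : (4:ℝ) • d = (c2 - c3) • w := by
        rw [sub_smul]
        linear_combination (norm := module) hc2 - hc3
      set a : ℝ := c0 - c1
      set b : ℝ := c2 - c3
      have ha0 : a ≠ 0 := by
        intro h
        rw [h, zero_smul] at ha
        have : m = 0 := by
          have := congrArg (fun y => (2:ℝ)⁻¹ • y) ha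
          simpa [smul_smul] using this
        exact hm0 this
      have hkey : (4*a) • d = (2*b) • m := by
        linear_combination (norm := module) a • hbw - b • ha
      have h4a : (4*a) ≠ 0 := by
        intro h
        apply ha0
        linarith [mul_eq_zero.mp h |>.resolve_left (by norm_num : (4:ℝ) ≠ 0)]
      set t : ℝ := (4*a)⁻¹ * (2*b)
      have hdm : d = t • m := by
        have := inv_smul_smul₀ h4a d
        rw [← this, hkey, smul_smul]
      have e1 : ‖m - d‖ = |1 - t| := by
        rw [hdm]
        have : m - t • m = (1 - t) • m := by module
        rw [this, norm_smul, Real.norm_eq_abs, hnm, mul_one]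
      have e2 : ‖m + d‖ = |1 + t| := by
        rw [hdm]
        have : m + t • m = (1 + t) • m := by module
        rw [this, norm_smul, Real.norm_eq_abs, hnm, mul_one]
      rw [h1] at e1
      rw [h2] at e2
      have q1 : (1 - t)^2 = 1 := by rw [← sq_abs, ← e1]; norm_num
      have q2 : (1 + t)^2 = 1 := by rw [← sq_abs, ← e2]; norm_num
      have ht : t = 0 := by nlinarith
      rw [ht, zero_smul] at hdm
      exact hd0 hdm
    obtain ⟨p, hp⟩ := H x hncol
    have e0 : (0 : X) = p := by
      have h' : (0:X) ∈ ({p} : Set X) := by rw [← hp]; exact h0ft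
      simpa using h'
    have ed : d = p := by
      have h' : d ∈ ({p} : Set X) := by rw [← hp]; exact hdft
      simpa using h'
    exact hd0 (by rw [ed, ← e0])
  · -- strictly convex ⟹ unique FT points
    intro _ x hcol
    obtain ⟨p, hp⟩ := ft_exists (by omega) x
    refine ⟨p, Set.eq_singleton_iff_unique_mem.mpr ⟨hp, fun q hq => ft_unique x hcol hq hp⟩⟩
end

section
/- Let X be a real normed vector space of dimension 2. Suppose there exist continuous linear functionals φ_1,…,φ_n on X (n ≥ 1) with ‖φ_i‖ = 1 for all i and Σ_{i=1}^n φ_i = 0, such that every face F(φ_i) contains at least two distinct points. Then there exist points x_1,…,x_n in X for which the Fermat–Torricelli set ft(x_1,…,x_n) has nonempty interior. -/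
private lemma face_cone_lemma {X : Type*} [NormedAddCommGroup X] [NormedSpace ℝ X]
    (hd : Module.finrank ℝ X = 2) (φ : X →L[ℝ] ℝ) (hφ : ‖φ‖ = 1)
    {u v : X} (huv : u ≠ v) (hu : u ∈ face φ) (hv : v ∈ face φ) :
    ∃ S : Set X, IsOpen S ∧ (0:X) ∈ S ∧ ∀ w ∈ S, ‖u + v + w‖ = φ (u + v + w) := by
  have : FiniteDimensional ℝ X := FiniteDimensional.of_finrank_eq_succ hd
  obtain ⟨hun, huφ⟩ := hu
  obtain ⟨hvn, hvφ⟩ := hv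
  have hli : LinearIndependent ℝ ![u, v] := by
    rw [LinearIndependent.pair_iff]
    intro s t hst
    have h1 : s + t = 0 := by
      have := congrArg φ hst
      simp only [map_add, map_smul, huφ, hvφ, smul_eq_mul, mul_one, map_zero] at this
      exact this
    have ht : t = -s := by linarith
    have h2 : s • (u - v) = 0 := by
      rw [ht] at hst
      rw [smul_sub]
      rw [neg_smul] at hst
      linear_combination (norm := abel) hst
    rcases smul_eq_zero.mp h2 with hs | huv'
    · exact ⟨hs, by rw [ht, hs, neg_zero]⟩
    · exact absurd (sub_eq_zero.mp huv') huv
  let B := basisOfLinearIndependentOfCardEqFinrank hli (by simp [hd])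
  have hB0 : B 0 = u := by
    simp [B, coe_basisOfLinearIndependentOfCardEqFinrank]
  have hB1 : B 1 = v := by
    simp [B, coe_basisOfLinearIndependentOfCardEqFinrank]
  have hcont : ∀ j : Fin 2, Continuous fun w : X => B.repr (u + v + w) j := by
    intro j
    have h1 : Continuous fun z : X => B.coord j z :=
      (B.coord j).continuous_of_finiteDimensional
    have h2 : Continuous fun w : X => u + v + w := continuous_const.add continuous_id
    exact h1.comp h2
  refine ⟨{w | 0 < B.repr (u + v + w) 0 ∧ 0 < B.repr (u + v + w) 1}, ?_, ?_, ?_⟩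
  · exact (isOpen_lt continuous_const (hcont 0)).and (isOpen_lt continuous_const (hcont 1))
  · have : u + v + (0:X) = B 0 + B 1 := by rw [hB0, hB1, add_zero]
    constructor <;> simp [this, Finsupp.single_apply]
  · intro w hw
    set a := B.repr (u + v + w) 0 with ha
    set b := B.repr (u + v + w) 1 with hb
    have hrep : u + v + w = a • u + b • v := by
      conv_lhs => rw [← B.sum_repr (u + v + w)]
      rw [Fin.sum_univ_two, hB0, hB1]
    have hφw : φ (u + v + w) = a + b := by
      rw [hrep]
      simp [huφ, hvφ]
    have hub : ‖u + v + w‖ ≤ a + b := by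
      rw [hrep]
      calc ‖a • u + b • v‖ ≤ ‖a • u‖ + ‖b • v‖ := norm_add_le _ _
        _ = a + b := by
            rw [norm_smul, norm_smul, hun, hvn, mul_one, mul_one, Real.norm_eq_abs,
              Real.norm_eq_abs, abs_of_pos hw.1, abs_of_pos hw.2]
    have hlb : a + b ≤ ‖u + v + w‖ := by
      calc a + b = φ (u + v + w) := hφw.symm
        _ ≤ ‖φ (u + v + w)‖ := le_abs_self _
        _ ≤ ‖φ‖ * ‖u + v + w‖ := φ.le_opNorm _
        _ = ‖u + v + w‖ := by rw [hφ, one_mul]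
    rw [hφw]
    linarith

/-- If a Minkowski plane has a consistent set of `n` faces of the unit circle, all of
which are flattenings, then there are `n` points whose Fermat–Torricelli set has
nonempty interior (is a non-degenerate polygon). -/
theorem ft_polygon_of_consistent_flattenings
    {X : Type*} [NormedAddCommGroup X] [NormedSpace ℝ X]
    (hd : Module.finrank ℝ X = 2)
    {n : ℕ} (hn : 1 ≤ n) (φ : Fin n → (X →L[ℝ] ℝ))
    (hnorm : ∀ i, ‖φ i‖ = 1) (hsum : ∑ i, φ i = 0)
    (hflat : ∀ i, ∃ u v : X, u ≠ v ∧ u ∈ face (φ i) ∧ v ∈ face (φ i)) :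
    ∃ x : Fin n → X, (interior (ft x)).Nonempty := by
  choose u v huv hu hv using hflat
  choose S hSopen hS0 hSkey using fun i =>
    face_cone_lemma hd (φ i) (hnorm i) (huv i) (hu i) (hv i)
  set x : Fin n → X := fun i => -(u i + v i) with hx
  refine ⟨x, 0, ?_⟩
  have hU : IsOpen (⋂ i, S i) := isOpen_iInter_of_finite hSopen
  have hmem : (0:X) ∈ ⋂ i, S i := Set.mem_iInter.2 hS0
  have hsub : (⋂ i, S i) ⊆ ft x := by
    intro p hp q
    have key : ∀ i, ‖p - x i‖ = φ i (p - x i) := by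
      intro i
      have h := hSkey i p (Set.mem_iInter.1 hp i)
      have hpx : p - x i = u i + v i + p := by
        rw [hx]
        beta_reduce
        abel
      rw [hpx]
      exact h
    have h1 : ∑ i, ‖p - x i‖ = ∑ i, φ i (p - x i) :=
      Finset.sum_congr rfl fun i _ => key i
    have h2 : ∑ i, φ i (p - x i) = ∑ i, φ i (q - x i) := by
      have h0 : ∑ i, φ i (p - q) = 0 := by
        rw [← ContinuousLinearMap.sum_apply, hsum, ContinuousLinearMap.zero_apply]
      have h3 : ∑ i, (φ i (p - x i) - φ i (q - x i)) = 0 := by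
        rw [← h0]
        refine Finset.sum_congr rfl fun i _ => ?_
        rw [← map_sub]
        congr 1
        abel
      rw [Finset.sum_sub_distrib] at h3
      linarith
    have h4 : ∀ i ∈ Finset.univ, φ i (q - x i) ≤ ‖q - x i‖ := by
      intro i _
      calc φ i (q - x i) ≤ ‖φ i (q - x i)‖ := le_abs_self _
        _ ≤ ‖φ i‖ * ‖q - x i‖ := (φ i).le_opNorm _
        _ = ‖q - x i‖ := by rw [hnorm i, one_mul]
    calc ∑ i, ‖p - x i‖ = ∑ i, φ i (q - x i) := by rw [h1, h2]
      _ ≤ ∑ i, ‖q - x i‖ := Finset.sum_le_sum h4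
  exact interior_mono hsub (by rwa [hU.interior_eq])
end

section
/- Let X be a real normed vector space of dimension 2. Suppose there exist continuous linear functionals φ_1,…,φ_n on X (n ≥ 2) with ‖φ_i‖ = 1 for all i and Σ_{i=1}^n φ_i = 0, such that the faces F(φ_1),…,F(φ_{n−1}) each contain at least two distinct points and the face F(φ_n) is a singleton. Then there exist points x_1,…,x_n in X and a ≠ b in X such that the Fermat–Torricelli set ft(x_1,…,x_n) equals the closed segment with endpoints a and b. -/
lemma phi_le_norm {X : Type*} [NormedAddCommGroup X] [NormedSpace ℝ X]
    {φ : X →L[ℝ] ℝ} (h : ‖φ‖ = 1) (v : X) : φ v ≤ ‖v‖ := by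
  calc φ v ≤ |φ v| := le_abs_self _
    _ = ‖φ v‖ := rfl
    _ ≤ ‖φ‖ * ‖v‖ := φ.le_opNorm v
    _ = ‖v‖ := by rw [h, one_mul]

lemma exists_coords {X : Type*} [NormedAddCommGroup X] [NormedSpace ℝ X]
    (hd : Module.finrank ℝ X = 2) (φ : X →L[ℝ] ℝ) {a b : X}
    (ha : ‖a‖ = 1) (hφa : φ a = 1) (hb : ‖b‖ = 1) (hφb : φ b = 1) (hab : a ≠ b)
    (v : X) : ∃ α β : ℝ, v = α • a + β • b := by
  have li : LinearIndependent ℝ ![a, b] := by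
    rw [LinearIndependent.pair_iff]
    intro s t hst
    have h1 : φ (s • a + t • b) = s + t := by simp [hφa, hφb]
    have h2 : s + t = 0 := by rw [← h1, hst, map_zero]
    have h3 : t • (a - b) = 0 := by
      have : s = -t := by linarith
      rw [this] at hst
      rw [smul_sub]
      linear_combination (norm := module) -hst
    rcases smul_eq_zero.1 h3 with h | h
    · constructor <;> linarith [h2, h]
    · exact absurd (sub_eq_zero.1 h) hab
  let B : Module.Basis (Fin 2) ℝ X :=
    basisOfLinearIndependentOfCardEqFinrank li (by simp [hd])
  have hB : ⇑B = ![a, b] := coe_basisOfLinearIndependentOfCardEqFinrank li _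
  refine ⟨B.repr v 0, B.repr v 1, ?_⟩
  have := B.sum_repr v
  rw [Fin.sum_univ_two, hB] at this
  simpa using this.symm

lemma ft_eq_inter {X : Type*} [NormedAddCommGroup X] [NormedSpace ℝ X]
    {n : ℕ} (φ : Fin n → (X →L[ℝ] ℝ)) (hnorm : ∀ i, ‖φ i‖ = 1)
    (hsum : ∑ i, φ i = 0) (x : Fin n → X)
    (p₀ : X) (hp₀ : ∀ i, φ i (p₀ - x i) = ‖p₀ - x i‖) :
    ft x = {p | ∀ i, φ i (p - x i) = ‖p - x i‖} := by
  have key : ∀ q : X, ∑ i, φ i (q - x i) = -∑ i, φ i (x i) := by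
    intro q
    have h0 : ∑ i, φ i q = 0 := by
      rw [← ContinuousLinearMap.sum_apply, hsum]; rfl
    simp only [map_sub]
    rw [Finset.sum_sub_distrib, h0, zero_sub]
  have lb : ∀ q : X, -∑ i, φ i (x i) ≤ ∑ i, ‖q - x i‖ := by
    intro q
    rw [← key q]
    exact Finset.sum_le_sum fun i _ => phi_le_norm (hnorm i) _
  have hmin : ∑ i, ‖p₀ - x i‖ = -∑ i, φ i (x i) := by
    rw [← key p₀]
    exact (Finset.sum_congr rfl fun i _ => (hp₀ i).symm)
  ext p
  constructor
  · intro hp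
    have h1 : ∑ i, ‖p - x i‖ ≤ -∑ i, φ i (x i) := hmin ▸ hp p₀
    have h2 : ∑ i, ‖p - x i‖ = ∑ i, φ i (p - x i) := by
      have := lb p
      rw [← key p] at *
      linarith [h1, this]
    have := (Finset.sum_eq_sum_iff_of_le
      (fun i _ => phi_le_norm (hnorm i) (p - x i))).1 h2.symm
    intro i
    exact this i (Finset.mem_univ i)
  · intro hp q
    have : ∑ i, ‖p - x i‖ = -∑ i, φ i (x i) := by
      rw [← key p]
      exact Finset.sum_congr rfl fun i _ => (hp i).symm
    rw [this]
    exact lb q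

set_option maxHeartbeats 1000000 in
/-- If a Minkowski plane has a consistent set of `n` faces of the unit circle, consisting
of `n-1` flattenings and one point-face, then there are `n` points whose Fermat–Torricelli
set is a non-degenerate segment. -/
theorem ft_segment_of_consistent_flattenings_and_point
    {X : Type*} [NormedAddCommGroup X] [NormedSpace ℝ X]
    (hd : Module.finrank ℝ X = 2)
    {n : ℕ} (hn : 2 ≤ n) (φ : Fin n → (X →L[ℝ] ℝ))
    (hnorm : ∀ i, ‖φ i‖ = 1) (hsum : ∑ i, φ i = 0)
    (hflat : ∀ i : Fin n, (i : ℕ) < n - 1 →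
      ∃ u v : X, u ≠ v ∧ u ∈ face (φ i) ∧ v ∈ face (φ i))
    (hpoint : ∀ i : Fin n, (i : ℕ) = n - 1 → ∃ u : X, face (φ i) = {u}) :
    ∃ x : Fin n → X, ∃ a b : X, a ≠ b ∧ ft x = segment ℝ a b := by
  have hn1 : n - 1 < n := by omega
  set j : Fin n := ⟨n - 1, hn1⟩ with hjdef
  obtain ⟨u, hu⟩ := hpoint j rfl
  have huf : u ∈ face (φ j) := by rw [hu]; rfl
  obtain ⟨hun, huφ⟩ := huf
  have hu0 : u ≠ 0 := by intro h; rw [h, norm_zero] at hun; norm_num at hun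
  -- flattening data
  choose a b hab haf hbf using hflat
  -- coordinates of u in each flattening basis
  choose α β hαβ using fun (i : Fin n) (h : (i : ℕ) < n - 1) =>
    exists_coords hd (φ i) (haf i h).1 (haf i h).2 (hbf i h).1 (hbf i h).2 (hab i h) u
  -- shifts
  set M : ∀ i : Fin n, (i : ℕ) < n - 1 → ℝ :=
    fun i h => max 0 (max (-(α i h)) (-(β i h))) with hMdef
  have hM0 : ∀ i h, 0 ≤ M i h := fun i h => le_max_left _ _
  have hMα : ∀ i h, -(α i h) ≤ M i h := fun i h =>
    le_trans (le_max_left _ _) (le_max_right _ _)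
  have hMβ : ∀ i h, -(β i h) ≤ M i h := fun i h =>
    le_trans (le_max_right _ _) (le_max_right _ _)
  -- the points
  set x : Fin n → X := fun i =>
    if h : (i : ℕ) < n - 1 then (-(M i h)) • (a i h + b i h) else 0 with hxdef
  -- the cones
  set C : Fin n → Set X := fun i => {v | φ i v = ‖v‖} with hCdef
  have hle : ∀ i (v : X), φ i v ≤ ‖v‖ := fun i v => phi_le_norm (hnorm i) v
  have hcone : ∀ (i : Fin n) (h : i.val < n - 1) (s t : ℝ), 0 ≤ s → 0 ≤ t →
      s • (a i h) + t • (b i h) ∈ C i := by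
    intro i h s t hs ht
    have h1 : φ i (s • a i h + t • b i h) = s + t := by
      simp [(haf i h).2, (hbf i h).2]
    have h2 : ‖s • a i h + t • b i h‖ ≤ s + t := by
      calc ‖s • a i h + t • b i h‖ ≤ ‖s • a i h‖ + ‖t • b i h‖ := norm_add_le _ _
        _ = s + t := by
            rw [norm_smul, norm_smul, (haf i h).1, (hbf i h).1]
            simp [abs_of_nonneg hs, abs_of_nonneg ht]
    have h3 : ‖s • a i h + t • b i h‖ = s + t :=
      le_antisymm h2 (by rw [← h1]; exact hle i _)
    exact h1.trans h3.symm
  have hjval : (j : ℕ) = n - 1 := rfl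
  have hnotj : ¬ ((j : ℕ) < n - 1) := by omega
  have hxj : x j = 0 := by rw [hxdef]; exact dif_neg hnotj
  have hxi : ∀ (i : Fin n) (h : i.val < n - 1),
      x i = (-(M i h)) • (a i h + b i h) := by
    intro i h; rw [hxdef]; exact dif_pos h
  -- membership of multiples of u in C j
  have hCj : ∀ v ∈ C j, v = ‖v‖ • u := by
    intro v hv
    rcases eq_or_ne v 0 with rfl | hv0
    · simp
    · have hvn : (0 : ℝ) < ‖v‖ := norm_pos_iff.2 hv0
      have hw : (‖v‖⁻¹ • v) ∈ face (φ j) := by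
        constructor
        · rw [norm_smul, Real.norm_eq_abs, abs_of_pos (inv_pos.2 hvn)]
          field_simp
        · rw [map_smul]
          have : φ j v = ‖v‖ := hv
          rw [this, smul_eq_mul, inv_mul_cancel₀ hvn.ne']
      rw [hu] at hw
      have : ‖v‖⁻¹ • v = u := hw
      rw [← this, smul_smul]
      rw [mul_inv_cancel₀ hvn.ne', one_smul]
  have htu : ∀ t : ℝ, 0 ≤ t → (t • u) ∈ C j := by
    intro t ht
    show φ j (t • u) = ‖t • u‖
    rw [map_smul, huφ, norm_smul, hun, smul_eq_mul, mul_one, mul_one,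
      Real.norm_eq_abs, abs_of_nonneg ht]
  -- the parameter set
  set A : Set ℝ := {t | ∀ i, t • u - x i ∈ C i} with hAdef
  have h0A : (0 : ℝ) ∈ A := by
    intro i
    by_cases h : i.val < n - 1
    · rw [hxi i h, zero_smul, zero_sub, neg_smul, neg_neg, smul_add]
      exact hcone i h _ _ (hM0 i h) (hM0 i h)
    · have hij : i = j := by apply Fin.ext; omega
      rw [hij, hxj, zero_smul, sub_zero]
      show φ j 0 = ‖(0 : X)‖
      simp
  have h1A : (1 : ℝ) ∈ A := by
    intro i
    by_cases h : i.val < n - 1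
    · rw [hxi i h, one_smul, neg_smul, sub_neg_eq_add]
      have hc := hcone i h (α i h + M i h) (β i h + M i h)
        (by linarith [hMα i h]) (by linarith [hMβ i h])
      have : u + M i h • (a i h + b i h)
          = (α i h + M i h) • a i h + (β i h + M i h) • b i h := by
        rw [hαβ i h]; module
      rw [this]; exact hc
    · have hij : i = j := by apply Fin.ext; omega
      rw [hij, hxj, one_smul, sub_zero]
      show φ j u = ‖u‖
      rw [huφ, hun]
  have hApos : ∀ t ∈ A, 0 ≤ t := by
    intro t ht
    have := ht j
    rw [hxj, sub_zero] at this
    have h1 : φ j (t • u) = t := by rw [map_smul, huφ, smul_eq_mul, mul_one]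
    have h2 : ‖t • u‖ = |t| := by rw [norm_smul, hun, mul_one, Real.norm_eq_abs]
    have ht2 : t = |t| := h1.symm.trans (this.trans h2)
    rw [ht2]; exact abs_nonneg t
  -- upper bound
  have hsumu : ∑ i, φ i u = 0 := by
    rw [← ContinuousLinearMap.sum_apply, hsum]; rfl
  have hex : ∃ (i : Fin n), i.val < n - 1 ∧ φ i u < 0 := by
    by_contra hcon
    push_neg at hcon
    have h1 : ∑ i ∈ Finset.univ.erase j, φ i u + φ j u = ∑ i, φ i u :=
      Finset.sum_erase_add _ _ (Finset.mem_univ j)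
    have h2 : 0 ≤ ∑ i ∈ Finset.univ.erase j, φ i u := by
      apply Finset.sum_nonneg
      intro i hi
      have hij : i ≠ j := (Finset.mem_erase.1 hi).1
      have : i.val < n - 1 := by
        have : i.val ≠ n - 1 := fun hv => hij (Fin.ext hv)
        omega
      exact hcon i this
    rw [hsumu, huφ] at h1
    linarith
  obtain ⟨i₀, hi₀, hφi₀⟩ := hex
  have hAbdd : BddAbove A := by
    refine ⟨(2 * M i₀ hi₀) / (-(φ i₀ u)), ?_⟩
    intro t ht
    have hmem := ht i₀
    rw [hxi i₀ hi₀, neg_smul, sub_neg_eq_add] at hmem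
    have heq : φ i₀ (t • u + M i₀ hi₀ • (a i₀ hi₀ + b i₀ hi₀))
        = t * φ i₀ u + 2 * M i₀ hi₀ := by
      simp only [map_add, map_smul, smul_eq_mul, (haf i₀ hi₀).2, (hbf i₀ hi₀).2]
      ring
    have hge : 0 ≤ t * φ i₀ u + 2 * M i₀ hi₀ := by
      rw [← heq, hmem]; exact norm_nonneg _
    rw [le_div_iff₀ (by linarith : (0:ℝ) < -(φ i₀ u))]
    nlinarith [hge]
  -- convexity and closedness of A
  have hCconv : ∀ i, Convex ℝ (C i) := by
    intro i v hv w hw s t hs ht hst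
    have h1 : φ i (s • v + t • w) = s * ‖v‖ + t * ‖w‖ := by
      rw [map_add, map_smul, map_smul, smul_eq_mul, smul_eq_mul, hv, hw]
    have h2 : ‖s • v + t • w‖ ≤ s * ‖v‖ + t * ‖w‖ := by
      calc ‖s • v + t • w‖ ≤ ‖s • v‖ + ‖t • w‖ := norm_add_le _ _
        _ = s * ‖v‖ + t * ‖w‖ := by
            rw [norm_smul, norm_smul, Real.norm_eq_abs, Real.norm_eq_abs,
              abs_of_nonneg hs, abs_of_nonneg ht]
    have h3 : ‖s • v + t • w‖ = s * ‖v‖ + t * ‖w‖ :=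
      le_antisymm h2 (by rw [← h1]; exact hle i _)
    exact h1.trans h3.symm
  have hAconv : Convex ℝ A := by
    intro t1 ht1 t2 ht2 s r hs hr hsr i
    have e : (s • t1 + r • t2) • u - x i
        = s • (t1 • u - x i) + r • (t2 • u - x i) := by
      have hx : x i = s • x i + r • x i := by rw [← add_smul, hsr, one_smul]
      conv_lhs => rw [hx]
      simp only [smul_eq_mul]
      module
    rw [e]
    exact hCconv i (ht1 i) (ht2 i) hs hr hsr
  have hCclosed : ∀ i, IsClosed (C i) := by
    intro i
    exact isClosed_eq (φ i).continuous continuous_norm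
  have hAclosed : IsClosed A := by
    have : A = ⋂ i, (fun t : ℝ => t • u - x i) ⁻¹' (C i) := by
      ext t; simp only [hAdef, Set.mem_setOf_eq, Set.mem_iInter, Set.mem_preimage]
    rw [this]
    exact isClosed_iInter fun i =>
      (hCclosed i).preimage ((continuous_id.smul continuous_const).sub continuous_const)
  set T : ℝ := sSup A with hTdef
  have hAne : A.Nonempty := ⟨0, h0A⟩
  have hTmem : T ∈ A := hAclosed.csSup_mem hAne hAbdd
  have hT1 : (1 : ℝ) ≤ T := le_csSup hAbdd h1A
  have hTpos : (0 : ℝ) < T := lt_of_lt_of_le one_pos hT1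
  have hAIcc : A = Set.Icc 0 T := by
    apply Set.Subset.antisymm
    · intro t ht; exact ⟨hApos t ht, le_csSup hAbdd ht⟩
    · exact (hAconv.ordConnected).out h0A hTmem
  have hft : ft x = {p : X | ∀ i, φ i (p - x i) = ‖p - x i‖} := by
    apply ft_eq_inter φ hnorm hsum x 0
    intro i
    have h := h0A i
    rw [zero_smul, zero_sub] at h
    have : (0 : X) - x i = -x i := zero_sub _
    rw [this]
    exact h
  have himg : {p : X | ∀ i, φ i (p - x i) = ‖p - x i‖}
      = (fun t : ℝ => t • u) '' Set.Icc 0 T := by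
    ext p
    constructor
    · intro hp
      have hpj : p ∈ C j := by
        have h := hp j
        rw [hxj, sub_zero] at h
        exact h
      have hpu : p = ‖p‖ • u := hCj p hpj
      have hmemA : ‖p‖ ∈ A := by
        intro i
        show ‖p‖ • u - x i ∈ C i
        rw [← hpu]
        exact hp i
      exact ⟨‖p‖, hAIcc ▸ hmemA, hpu.symm⟩
    · rintro ⟨t, htA, rfl⟩
      have hA : t ∈ A := hAIcc.symm ▸ htA
      intro i
      exact hA i
  have hseg : (fun t : ℝ => t • u) '' Set.Icc 0 T = segment ℝ 0 (T • u) := by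
    ext p
    constructor
    · rintro ⟨t, ⟨ht0, htT⟩, rfl⟩
      refine ⟨1 - t / T, t / T, ?_, ?_, by ring, ?_⟩
      · have : t / T ≤ 1 := (div_le_one hTpos).2 htT
        linarith
      · positivity
      · rw [smul_zero, zero_add, smul_smul, div_mul_cancel₀ t (ne_of_gt hTpos)]
    · rintro ⟨s, r, hs, hr, hsr, rfl⟩
      refine ⟨r * T, ⟨by positivity, ?_⟩, ?_⟩
      · have hr1 : r ≤ 1 := by linarith
        calc r * T ≤ 1 * T := mul_le_mul_of_nonneg_right hr1 hTpos.le
          _ = T := one_mul T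
      · show (r * T) • u = s • (0 : X) + r • (T • u)
        rw [smul_zero, zero_add, smul_smul]
  refine ⟨x, 0, T • u, ?_, ?_⟩
  · exact (smul_ne_zero (ne_of_gt hTpos) hu0).symm
  · rw [hft, himg, hseg]
end

section
/- Let X be a real normed vector space of dimension 2 and let 2 ≤ k ≤ n−1. Suppose there exist continuous linear functionals φ_1,…,φ_n on X with ‖φ_i‖ = 1 for all i and Σ_{i=1}^n φ_i = 0, such that the faces F(φ_1),…,F(φ_k) each contain at least two distinct points, the faces F(φ_{k+1}),…,F(φ_n) are singletons, and the linear span of the union of these singleton faces is a one-dimensional subspace of X. Then there exist points x_1,…,x_n in X and a ≠ b in X such that the Fermat–Torricelli set ft(x_1,…,x_n) equals the closed segment with endpoints a and b. -/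
section Aux
variable {X : Type*} [NormedAddCommGroup X] [NormedSpace ℝ X]

lemma phi_le_norm_s9 (φ : X →L[ℝ] ℝ) (hφ : ‖φ‖ = 1) (z : X) : φ z ≤ ‖z‖ := by
  calc φ z ≤ ‖φ z‖ := le_abs_self _
    _ ≤ ‖φ‖ * ‖z‖ := φ.le_opNorm z
    _ = ‖z‖ := by rw [hφ, one_mul]

lemma flat_eq (φ : X →L[ℝ] ℝ) (hφ : ‖φ‖ = 1)
    {U V u : X} (hU1 : ‖U‖ = 1) (hU2 : φ U = 1) (hV1 : ‖V‖ = 1) (hV2 : φ V = 1)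
    {a b : ℝ} (hu : a • U + b • V = u) {t : ℝ} (ht0 : 0 ≤ t) (ht1 : t ≤ 1) :
    φ (max 0 (max a b) • (U + V) - t • u) = ‖max 0 (max a b) • (U + V) - t • u‖ := by
  set r : ℝ := max 0 (max a b) with hr
  have h0r : 0 ≤ r := le_max_left _ _
  have har : a ≤ r := le_trans (le_max_left a b) (le_max_right 0 _)
  have hbr : b ≤ r := le_trans (le_max_right a b) (le_max_right 0 _)
  have hca : 0 ≤ r - t * a := by nlinarith
  have hcb : 0 ≤ r - t * b := by nlinarith
  have hsplit : r • (U + V) - t • u = (r - t * a) • U + (r - t * b) • V := by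
    rw [← hu]; module
  have hφval : φ (r • (U + V) - t • u) = (r - t * a) + (r - t * b) := by
    rw [hsplit, map_add, map_smul, map_smul, hU2, hV2, smul_eq_mul, smul_eq_mul,
      mul_one, mul_one]
  have hnle : ‖r • (U + V) - t • u‖ ≤ (r - t * a) + (r - t * b) := by
    rw [hsplit]
    calc ‖(r - t * a) • U + (r - t * b) • V‖
        ≤ ‖(r - t * a) • U‖ + ‖(r - t * b) • V‖ := norm_add_le _ _
      _ = (r - t * a) + (r - t * b) := by
          rw [norm_smul, norm_smul, hU1, hV1, Real.norm_eq_abs, Real.norm_eq_abs,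
            abs_of_nonneg hca, abs_of_nonneg hcb, mul_one, mul_one]
  exact le_antisymm (phi_le_norm_s9 φ hφ _) (by rw [hφval]; exact hnle)

lemma point_eq_pos (φ : X →L[ℝ] ℝ) {u : X} (hu1 : ‖u‖ = 1) (hu2 : φ u = 1)
    {t : ℝ} (ht1 : t ≤ 1) :
    φ ((2 : ℝ) • u - t • u) = ‖(2 : ℝ) • u - t • u‖ := by
  have hsplit : (2 : ℝ) • u - t • u = (2 - t) • u := by rw [← sub_smul]
  rw [hsplit, map_smul, smul_eq_mul, hu2, norm_smul, hu1, Real.norm_eq_abs,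
    abs_of_nonneg (by linarith : (0:ℝ) ≤ 2 - t)]

lemma point_eq_neg (φ : X →L[ℝ] ℝ) {u : X} (hu1 : ‖u‖ = 1) (hu2 : φ (-u) = 1)
    {t : ℝ} (ht0 : 0 ≤ t) :
    φ (-u - t • u) = ‖-u - t • u‖ := by
  have hsplit : -u - t • u = (1 + t) • (-u) := by module
  rw [hsplit, map_smul, smul_eq_mul, hu2, norm_smul, norm_neg, hu1, Real.norm_eq_abs,
    abs_of_nonneg (by linarith : (0:ℝ) ≤ 1 + t)]

end Aux

set_option maxHeartbeats 1000000 in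
/-- If a Minkowski plane has a consistent set of `n` faces consisting of `k` flattenings
(`2 ≤ k ≤ n-1`) and `n-k` point-faces whose union spans a one-dimensional subspace, then
there are `n` points whose Fermat–Torricelli set is a non-degenerate segment. -/
theorem ft_segment_of_consistent_flattenings_and_collinear_points
    {X : Type*} [NormedAddCommGroup X] [NormedSpace ℝ X]
    (hd : Module.finrank ℝ X = 2)
    {n k : ℕ} (hk₁ : 2 ≤ k) (hk₂ : k ≤ n - 1)
    (φ : Fin n → (X →L[ℝ] ℝ))
    (hnorm : ∀ i, ‖φ i‖ = 1) (hsum : ∑ i, φ i = 0)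
    (hflat : ∀ i : Fin n, (i : ℕ) < k →
      ∃ u v : X, u ≠ v ∧ u ∈ face (φ i) ∧ v ∈ face (φ i))
    (hpoint : ∀ i : Fin n, k ≤ (i : ℕ) → ∃ u : X, face (φ i) = {u})
    (hspan : Module.finrank ℝ
      (Submodule.span ℝ (⋃ i ∈ {i : Fin n | k ≤ (i : ℕ)}, face (φ i))) = 1) :
    ∃ x : Fin n → X, ∃ a b : X, a ≠ b ∧ ft x = segment ℝ a b := by
  classical
  have hn3 : 3 ≤ n := by omega
  have hX : FiniteDimensional ℝ X := Module.finite_of_finrank_eq_succ hd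
  choose uu vv huvne huu hvv using hflat
  choose w hw using hpoint
  set i0 : Fin n := ⟨n - 1, by omega⟩ with hi0
  have hki0 : k ≤ (i0 : ℕ) := by simp only [hi0]; omega
  set u : X := w i0 hki0 with hu_def
  have hu_face : u ∈ face (φ i0) := by rw [hw i0 hki0]; exact Set.mem_singleton _
  have hu_norm : ‖u‖ = 1 := hu_face.1
  have hu_ne : u ≠ 0 := by intro h; rw [h, norm_zero] at hu_norm; norm_num at hu_norm
  -- the span of the point faces is ℝ ∙ u
  have hSpanEq : Submodule.span ℝ {u} =
      Submodule.span ℝ (⋃ i ∈ {i : Fin n | k ≤ (i : ℕ)}, face (φ i)) := by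
    apply Submodule.eq_of_le_of_finrank_eq
    · apply Submodule.span_mono
      intro z hz
      rw [Set.mem_singleton_iff] at hz
      subst hz
      exact Set.mem_biUnion hki0 hu_face
    · rw [hspan]
      exact finrank_span_singleton hu_ne
  -- each point-face vector is ±u
  have hsig : ∀ (j : Fin n) (hj : k ≤ (j : ℕ)), w j hj = u ∨ w j hj = -u := by
    intro j hj
    have hwf : w j hj ∈ face (φ j) := by rw [hw j hj]; exact Set.mem_singleton _
    have hwn : ‖w j hj‖ = 1 := hwf.1
    have : w j hj ∈ Submodule.span ℝ ({u} : Set X) := by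
      rw [hSpanEq]
      exact Submodule.subset_span (Set.mem_biUnion hj hwf)
    obtain ⟨c, hc⟩ := Submodule.mem_span_singleton.mp this
    have hcabs : |c| = 1 := by
      have := hc ▸ hwn
      rwa [norm_smul, hu_norm, mul_one, Real.norm_eq_abs] at this
    rcases (abs_eq (by norm_num : (0:ℝ) ≤ 1)).mp hcabs with h1 | h1
    · left; rw [← hc, h1, one_smul]
    · right; rw [← hc, h1, neg_smul, one_smul]
  -- flattening coefficients
  have hcoef : ∀ (i : Fin n) (hi : (i : ℕ) < k),
      ∃ a b : ℝ, a • uu i hi + b • vv i hi = u := by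
    intro i hi
    have hU : uu i hi ∈ face (φ i) := huu i hi
    have hV : vv i hi ∈ face (φ i) := hvv i hi
    have hUne : uu i hi ≠ 0 := by
      intro h; have := hU.1; rw [h, norm_zero] at this; norm_num at this
    have hind : LinearIndependent ℝ ![uu i hi, vv i hi] := by
      rw [LinearIndependent.pair_iff]
      intro s t hst
      have hφ : s + t = 0 := by
        have := congrArg (φ i) hst
        simpa [hU.2, hV.2] using this
      have hts : t = -s := by linarith
      rw [hts, neg_smul, ← sub_eq_add_neg, ← smul_sub] at hst
      rcases smul_eq_zero.mp hst with h | h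
      · constructor <;> [exact h; rw [hts, h, neg_zero]]
      · exact absurd (sub_eq_zero.mp h) (huvne i hi)
    have htop : Submodule.span ℝ (Set.range ![uu i hi, vv i hi]) = ⊤ :=
      hind.span_eq_top_of_card_eq_finrank (by simp [hd])
    have : u ∈ Submodule.span ℝ ({uu i hi, vv i hi} : Set X) := by
      have hr : Set.range ![uu i hi, vv i hi] = {uu i hi, vv i hi} := by
        ext z
        simp [Matrix.range_cons, Matrix.range_empty]
        tauto
      rw [← hr, htop]; trivial
    exact Submodule.mem_span_pair.mp this
  choose α β hαβ using hcoef
  -- the configuration of points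
  set x : Fin n → X := fun i =>
    if hi : (i : ℕ) < k then (max 0 (max (α i hi) (β i hi))) • (uu i hi + vv i hi)
    else (if w i (le_of_not_gt hi) = u then (2 : ℝ) • u else -u) with hxdef
  -- key: points of the segment [0, u] satisfy the equality conditions
  have keyA : ∀ (i : Fin n) (t : ℝ), 0 ≤ t → t ≤ 1 →
      φ i (x i - t • u) = ‖x i - t • u‖ := by
    intro i t ht0 ht1
    by_cases hi : (i : ℕ) < k
    · have hxi : x i = (max 0 (max (α i hi) (β i hi))) • (uu i hi + vv i hi) := by
        simp only [hxdef, dif_pos hi]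
      rw [hxi]
      exact flat_eq (φ i) (hnorm i) (huu i hi).1 (huu i hi).2 (hvv i hi).1 (hvv i hi).2
        (hαβ i hi) ht0 ht1
    · have hi' : k ≤ (i : ℕ) := le_of_not_gt hi
      have hwf : w i hi' ∈ face (φ i) := by rw [hw i hi']; exact Set.mem_singleton _
      rcases hsig i hi' with hcase | hcase
      · have hxi : x i = (2 : ℝ) • u := by simp only [hxdef, dif_neg hi, if_pos hcase]
        rw [hxi]
        exact point_eq_pos (φ i) hu_norm (hcase ▸ hwf.2) ht1
      · have hne : ¬ (w i hi' = u) := by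
          rw [hcase]
          intro h
          apply hu_ne
          have h2 : (2:ℝ) • u = 0 := by
            rw [two_smul]
            nth_rewrite 1 [← h]
            simp
          rcases smul_eq_zero.mp h2 with h3 | h3
          · norm_num at h3
          · exact h3
        have hxi : x i = -u := by simp only [hxdef, dif_neg hi, if_neg hne]
        rw [hxi]
        exact point_eq_neg (φ i) hu_norm (hcase ▸ hwf.2) ht0
  -- the constant C
  set C : ℝ := ∑ i, φ i (x i) with hCdef
  have hφsum : ∀ p : X, ∑ i, φ i (x i - p) = C := by
    intro p
    have h1 : ∀ i, φ i (x i - p) = φ i (x i) - φ i p := fun i => map_sub _ _ _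
    rw [Finset.sum_congr rfl (fun i _ => h1 i), Finset.sum_sub_distrib]
    have h2 : ∑ i, φ i p = 0 := by
      rw [← ContinuousLinearMap.sum_apply, hsum, ContinuousLinearMap.zero_apply]
    rw [h2, sub_zero]
  have hlow : ∀ q : X, C ≤ ∑ i, ‖q - x i‖ := by
    intro q
    calc C = ∑ i, φ i (x i - q) := (hφsum q).symm
      _ ≤ ∑ i, ‖x i - q‖ :=
          Finset.sum_le_sum fun i _ => phi_le_norm_s9 (φ i) (hnorm i) _
      _ = ∑ i, ‖q - x i‖ := Finset.sum_congr rfl fun i _ => norm_sub_rev _ _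
  -- the equality set G
  set G : Set X := {p | ∀ i, φ i (x i - p) = ‖x i - p‖} with hGdef
  have hGval : ∀ p ∈ G, ∑ i, ‖p - x i‖ = C := by
    intro p hp
    calc ∑ i, ‖p - x i‖ = ∑ i, ‖x i - p‖ :=
          Finset.sum_congr rfl fun i _ => norm_sub_rev _ _
      _ = ∑ i, φ i (x i - p) := (Finset.sum_congr rfl fun i _ => (hp i).symm)
      _ = C := hφsum p
  have h0G : (0 : X) ∈ G := by
    intro i
    have := keyA i 0 le_rfl zero_le_one
    simpa using this
  have h1G : u ∈ G := by
    intro i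
    have := keyA i 1 zero_le_one le_rfl
    simpa using this
  have hGft : ft x = G := by
    ext p
    constructor
    · intro hp
      have hle : ∑ i, ‖p - x i‖ ≤ C := by
        have := hp 0
        rwa [hGval 0 h0G] at this
      have hge : C ≤ ∑ i, ‖p - x i‖ := hlow p
      have heq : ∑ i, (‖x i - p‖ - φ i (x i - p)) = 0 := by
        rw [Finset.sum_sub_distrib, hφsum p, sub_eq_zero]
        rw [← (Finset.sum_congr rfl fun i _ => norm_sub_rev p (x i) : _)]
        linarith
      intro i
      have hterm := (Finset.sum_eq_zero_iff_of_nonneg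
        (fun i _ => sub_nonneg.mpr (phi_le_norm_s9 (φ i) (hnorm i) (x i - p)))).mp heq
        i (Finset.mem_univ i)
      linarith [sub_eq_zero.mp hterm]
    · intro hp q
      rw [hGval p hp]
      exact hlow q
  -- G lies on the line through 0 in direction u
  have hline : ∀ p ∈ G, ∃ t : ℝ, p = t • u := by
    intro p hp
    have hx0 : x i0 = (2 : ℝ) • u := by
      simp only [hxdef, dif_neg (not_lt.mpr hki0), if_pos rfl, if_true]; exact if_pos rfl
    have h := hp i0
    set d : X := x i0 - p with hddef
    by_cases hd : d = 0
    · exact ⟨2, by rw [← hx0, ← sub_eq_zero.mp hd]⟩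
    · have hdn : (0:ℝ) < ‖d‖ := norm_pos_iff.mpr hd
      have hmem : ‖d‖⁻¹ • d ∈ face (φ i0) := by
        constructor
        · rw [norm_smul, Real.norm_eq_abs, abs_of_nonneg (inv_nonneg.mpr hdn.le),
            inv_mul_cancel₀ hdn.ne']
        · rw [map_smul, smul_eq_mul, ← h, inv_mul_cancel₀]
          rw [h]; exact hdn.ne'
      rw [hw i0 hki0] at hmem
      have hdu : d = ‖d‖ • u := by
        have : ‖d‖⁻¹ • d = u := hmem
        rw [← this, smul_smul, mul_inv_cancel₀ hdn.ne', one_smul]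
      refine ⟨2 - ‖d‖, ?_⟩
      have hpd : p = (2:ℝ) • u - ‖d‖ • u := by
        rw [← hdu, ← hx0, hddef]; abel
      rw [hpd, sub_smul]
  -- the parameter set T
  set T : Set ℝ := {t : ℝ | t • u ∈ G} with hTdef
  have h0T : (0 : ℝ) ∈ T := by show (0:ℝ) • u ∈ G; rw [zero_smul]; exact h0G
  have h1T : (1 : ℝ) ∈ T := by show (1:ℝ) • u ∈ G; rw [one_smul]; exact h1G
  -- T is bounded
  set M : ℝ := |C| + ∑ i, ‖x i‖ with hMdef
  have hTsub : T ⊆ Set.Icc (-M) M := by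
    intro t ht
    have hval : ∑ i, ‖t • u - x i‖ = C := by
      exact hGval _ ht
    have hterm : ∀ i : Fin n, |t| - ‖x i‖ ≤ ‖t • u - x i‖ := by
      intro i
      calc |t| - ‖x i‖ = ‖t • u‖ - ‖x i‖ := by
            rw [norm_smul, hu_norm, mul_one, Real.norm_eq_abs]
        _ ≤ ‖t • u - x i‖ := norm_sub_norm_le _ _
    have hsum' : (n : ℝ) * |t| - ∑ i, ‖x i‖ ≤ C := by
      have := Finset.sum_le_sum fun i (_ : i ∈ Finset.univ) => hterm i
      rw [hval] at this
      rw [Finset.sum_sub_distrib, Finset.sum_const, Finset.card_univ,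
        Fintype.card_fin, nsmul_eq_mul] at this
      linarith
    have hn1 : (1 : ℝ) ≤ (n : ℝ) := by
      have : 1 ≤ n := by omega
      exact_mod_cast this
    have habs : |t| ≤ M := by
      have h1 : |t| ≤ (n : ℝ) * |t| := le_mul_of_one_le_left (abs_nonneg t) hn1
      have h2 : C ≤ |C| := le_abs_self C
      rw [hMdef]; linarith
    exact abs_le.mp habs
  -- T is convex
  have hTconv : Convex ℝ T := by
    intro t ht s hs a b ha hb hab
    show (a • t + b • s) • u ∈ G
    intro i
    have hpt := ht i
    have hps := hs i
    have hcomb : x i - (a • t + b • s) • u =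
        a • (x i - t • u) + b • (x i - s • u) := by
      calc x i - (a • t + b • s) • u
          = (a + b) • (x i) - (a • t + b • s) • u := by rw [hab, one_smul]
        _ = a • (x i - t • u) + b • (x i - s • u) := by
            rw [smul_eq_mul, smul_eq_mul]
            module
    have hle : ‖x i - (a • t + b • s) • u‖ ≤ φ i (x i - (a • t + b • s) • u) := by
      calc ‖x i - (a • t + b • s) • u‖
          = ‖a • (x i - t • u) + b • (x i - s • u)‖ := by rw [hcomb]
        _ ≤ ‖a • (x i - t • u)‖ + ‖b • (x i - s • u)‖ := norm_add_le _ _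
        _ = a * ‖x i - t • u‖ + b * ‖x i - s • u‖ := by
            rw [norm_smul, norm_smul, Real.norm_eq_abs, Real.norm_eq_abs,
              abs_of_nonneg ha, abs_of_nonneg hb]
        _ = a * φ i (x i - t • u) + b * φ i (x i - s • u) := by rw [hpt, hps]
        _ = φ i (x i - (a • t + b • s) • u) := by
            rw [hcomb, map_add, map_smul, map_smul, smul_eq_mul, smul_eq_mul]
    exact le_antisymm (phi_le_norm_s9 (φ i) (hnorm i) _) hle
  -- T is closed
  have hTclosed : IsClosed T := by
    have : T = ⋂ i : Fin n, {t : ℝ | φ i (x i - t • u) = ‖x i - t • u‖} := by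
      ext t
      simp only [hTdef, hGdef, Set.mem_setOf_eq, Set.mem_iInter]
    rw [this]
    refine isClosed_iInter fun i => isClosed_eq ?_ ?_
    · exact (φ i).continuous.comp (continuous_const.sub (continuous_id.smul continuous_const))
    · exact (continuous_const.sub (continuous_id.smul continuous_const)).norm
  have hTcpt : IsCompact T :=
    Metric.isCompact_of_isClosed_isBounded hTclosed
      ((Metric.isBounded_Icc (-M) M).subset hTsub)
  have hTne : T.Nonempty := ⟨0, h0T⟩
  set t₀ : ℝ := sInf T with ht₀def
  set t₁ : ℝ := sSup T with ht₁def
  have ht₀T : t₀ ∈ T := hTcpt.sInf_mem hTne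
  have ht₁T : t₁ ∈ T := hTcpt.sSup_mem hTne
  have ht₀0 : t₀ ≤ 0 := csInf_le hTcpt.bddBelow h0T
  have h1t₁ : 1 ≤ t₁ := le_csSup hTcpt.bddAbove h1T
  have ht₀₁ : t₀ < t₁ := by linarith
  have hTIcc : T = Set.Icc t₀ t₁ := by
    apply Set.Subset.antisymm
    · intro t ht
      exact ⟨csInf_le hTcpt.bddBelow ht, le_csSup hTcpt.bddAbove ht⟩
    · exact hTconv.ordConnected.out ht₀T ht₁T
  -- conclusion
  refine ⟨x, t₀ • u, t₁ • u, ?_, ?_⟩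
  · intro hcontra
    have : (t₀ - t₁) • u = 0 := by rw [sub_smul, hcontra, sub_self]
    rcases smul_eq_zero.mp this with h | h
    · exact absurd (sub_eq_zero.mp h) (ne_of_lt ht₀₁)
    · exact hu_ne h
  · rw [hGft]
    ext p
    constructor
    · intro hp
      obtain ⟨t, rfl⟩ := hline p hp
      have htT : t ∈ T := hp
      rw [hTIcc] at htT
      obtain ⟨hta, htb⟩ := htT
      refine ⟨(t₁ - t) / (t₁ - t₀), (t - t₀) / (t₁ - t₀), ?_, ?_, ?_, ?_⟩
      · apply div_nonneg <;> linarith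
      · apply div_nonneg <;> linarith
      · rw [← add_div, show t₁ - t + (t - t₀) = t₁ - t₀ by ring]
        exact div_self (by linarith)
      · rw [smul_smul, smul_smul, ← add_smul]
        congr 1
        rw [div_mul_eq_mul_div, div_mul_eq_mul_div, ← add_div,
          show (t₁ - t) * t₀ + (t - t₀) * t₁ = t * (t₁ - t₀) by ring,
          mul_div_assoc, div_self (by linarith : t₁ - t₀ ≠ 0), mul_one]
    · rintro ⟨a, b, ha, hb, hab, rfl⟩
      have hcomb : a • t₀ • u + b • t₁ • u = (a * t₀ + b * t₁) • u := by
        rw [smul_smul, smul_smul, ← add_smul]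
      rw [hcomb]
      have : a * t₀ + b * t₁ ∈ T := by
        rw [hTIcc]
        constructor
        · nlinarith
        · nlinarith
      exact this
end

section
/- Let X be a real normed vector space of dimension 2 and let n ≥ 3 be odd. Then the following are equivalent: (1) for every choice of n points x_1,…,x_n in X, the Fermat–Torricelli set ft(x_1,…,x_n) is a single point; (2) for every family of continuous linear functionals φ_1,…,φ_n on X with ‖φ_i‖ = 1 for all i and Σ_{i=1}^n φ_i = 0, the number of indices i for which the face F(φ_i) contains at least two points is at most n − 2, and the linear span of the union of those faces F(φ_i) that are singletons is all of X (has dimension 2). -/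
open Module Filter

section AuxFT
variable {X : Type*} [NormedAddCommGroup X] [NormedSpace ℝ X]


/-- real version of exists_dual_vector -/
lemma exists_dual_vector_real (x : X) (hx : x ≠ 0) :
    ∃ g : X →L[ℝ] ℝ, ‖g‖ = 1 ∧ g x = ‖x‖ := by
  obtain ⟨g, hg1, hg2⟩ := exists_dual_vector ℝ x (norm_ne_zero_iff.mpr hx)
  exact ⟨g, hg1, by simpa using hg2⟩

section FD
variable [FiniteDimensional ℝ X]

lemma face_nonempty [Nontrivial X] {φ : X →L[ℝ] ℝ} (hφ : ‖φ‖ = 1) : (face φ).Nonempty := by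
  obtain ⟨u₁, hu₁⟩ := exists_norm_eq X (zero_le_one (α := ℝ))
  have hsne : (Metric.sphere (0:X) 1).Nonempty := ⟨u₁, by simpa using hu₁⟩
  have hcs : IsCompact (Metric.sphere (0:X) 1) := isCompact_sphere 0 1
  obtain ⟨u₀, hu₀s, hmax'⟩ := hcs.exists_isMaxOn hsne (φ.continuous.continuousOn)
  have hmax : ∀ u ∈ Metric.sphere (0:X) 1, φ u ≤ φ u₀ := fun u hu => hmax' hu
  have hu₀ : ‖u₀‖ = 1 := by simpa using hu₀s
  have hnn : 0 ≤ φ u₀ := by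
    have h1 : φ (-u₀) ≤ φ u₀ := hmax (-u₀) (by simp [hu₀])
    simp only [map_neg] at h1; linarith
  have hb : ∀ z : X, ‖φ z‖ ≤ φ u₀ * ‖z‖ := by
    intro z
    rcases eq_or_ne z 0 with rfl | hz
    · simp
    · have hz' : ‖z‖ ≠ 0 := norm_ne_zero_iff.mpr hz
      have h1 : φ (‖z‖⁻¹ • z) ≤ φ u₀ := hmax _ (by simp [norm_smul, inv_mul_cancel₀ hz'])
      have h2 : φ (-(‖z‖⁻¹ • z)) ≤ φ u₀ := hmax _ (by simp [norm_smul, inv_mul_cancel₀ hz'])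
      simp only [map_neg, map_smul, smul_eq_mul] at h1 h2
      rw [Real.norm_eq_abs, abs_le]
      have hz0 : (0:ℝ) < ‖z‖ := norm_pos_iff.mpr hz
      have e1 := mul_le_mul_of_nonneg_left h1 hz0.le
      have e2 := mul_le_mul_of_nonneg_left h2 hz0.le
      rw [← mul_assoc, mul_inv_cancel₀ hz', one_mul] at e1
      rw [mul_neg, ← mul_assoc, mul_inv_cancel₀ hz', one_mul] at e2
      constructor <;> nlinarith
  have hle : ‖φ‖ ≤ φ u₀ := φ.opNorm_le_bound hnn hb
  have hge : φ u₀ ≤ 1 := by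
    calc φ u₀ ≤ ‖φ u₀‖ := le_abs_self _
    _ ≤ ‖φ‖ * ‖u₀‖ := φ.le_opNorm u₀
    _ = 1 := by rw [hφ, hu₀, mul_one]
  exact ⟨u₀, hu₀, le_antisymm hge (hφ ▸ hle)⟩

lemma ft_nonempty {n : ℕ} (hn : 0 < n) (x : Fin n → X) : (ft x).Nonempty := by
  have i₀ : Fin n := ⟨0, hn⟩
  have hcont : Continuous (fun p : X => ∑ i, ‖p - x i‖) := by
    exact continuous_finset_sum _ fun i _ => (continuous_id.sub continuous_const).norm
  have htend : Tendsto (fun p : X => ∑ i, ‖p - x i‖) (cocompact X) atTop := by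
    have h1 : Tendsto (fun p : X => ‖p‖ - ‖x i₀‖) (cocompact X) atTop :=
      tendsto_norm_cocompact_atTop.atTop_add tendsto_const_nhds
    refine tendsto_atTop_mono (fun p => ?_) h1
    calc ‖p‖ - ‖x i₀‖ ≤ ‖p - x i₀‖ := by
          have := norm_sub_norm_le p (x i₀); linarith
    _ ≤ ∑ i, ‖p - x i‖ := Finset.single_le_sum (f := fun i => ‖p - x i‖) (fun i _ => norm_nonneg _) (Finset.mem_univ i₀)
  obtain ⟨p, hp⟩ := hcont.exists_forall_le htend
  exact ⟨p, hp⟩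

end FD



lemma cone_one {φ : X →L[ℝ] ℝ} {u : X} (hu : u ∈ face φ) {s : ℝ} (hs : 0 ≤ s) :
    φ (s • u) = ‖s • u‖ := by
  obtain ⟨hu1, hu2⟩ := hu
  simp [norm_smul, hu1, hu2, abs_of_nonneg hs]

lemma cone_two {φ : X →L[ℝ] ℝ} (hφ : ‖φ‖ = 1) {u w : X} (hu : u ∈ face φ) (hw : w ∈ face φ)
    {s t : ℝ} (hs : 0 ≤ s) (ht : 0 ≤ t) : φ (s • u + t • w) = ‖s • u + t • w‖ := by
  obtain ⟨hu1, hu2⟩ := hu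
  obtain ⟨hw1, hw2⟩ := hw
  have hval : φ (s • u + t • w) = s + t := by simp [hu2, hw2]
  have hle : ‖s • u + t • w‖ ≤ s + t := by
    calc ‖s • u + t • w‖ ≤ ‖s • u‖ + ‖t • w‖ := norm_add_le _ _
    _ = s + t := by simp [norm_smul, hu1, hw1, abs_of_nonneg hs, abs_of_nonneg ht]
  have hge : φ (s • u + t • w) ≤ ‖s • u + t • w‖ := by
    calc φ (s • u + t • w) ≤ ‖φ (s • u + t • w)‖ := le_abs_self _
    _ ≤ ‖φ‖ * ‖s • u + t • w‖ := φ.le_opNorm _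
    _ = ‖s • u + t • w‖ := by rw [hφ, one_mul]
  rw [hval] at hge ⊢; linarith

lemma exists_v (hd : Module.finrank ℝ X = 2) {φ : X →L[ℝ] ℝ} (hφ : ‖φ‖ = 1)
    (hne : (face φ).Nonempty) (d : X)
    (hpt : ∀ u, face φ = {u} → ∃ c : ℝ, u = c • d) :
    ∃ v : X, φ v = ‖v‖ ∧ φ (v + d) = ‖v + d‖ := by
  have : FiniteDimensional ℝ X := FiniteDimensional.of_finrank_eq_succ hd
  obtain ⟨u, hu⟩ := hne
  by_cases hs : face φ = {u}
  · obtain ⟨c, hc⟩ := hpt u hs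
    have hu0 : u ≠ 0 := by intro h; rw [h] at hu; simpa using hu.1
    have hc0 : c ≠ 0 := by rintro rfl; simp at hc; exact hu0 hc
    have hdu : d = c⁻¹ • u := by rw [hc, smul_smul, inv_mul_cancel₀ hc0, one_smul]
    refine ⟨(1 + |c⁻¹|) • u, cone_one hu (by positivity), ?_⟩
    have : (1 + |c⁻¹|) • u + d = (1 + |c⁻¹| + c⁻¹) • u := by
      rw [hdu, ← add_smul]
    rw [this]
    exact cone_one hu (by have := abs_nonneg c⁻¹; have := neg_abs_le c⁻¹; linarith)
  · -- there is another point w in the face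
    have hw : ∃ w ∈ face φ, w ≠ u := by
      by_contra h
      push_neg at h
      exact hs (Set.eq_singleton_iff_unique_mem.mpr ⟨hu, h⟩)
    obtain ⟨w, hwf, hwu⟩ := hw
    have hindep : LinearIndependent ℝ ![u, w] := by
      rw [linearIndependent_fin2]
      simp only [Matrix.cons_val_one, Matrix.head_cons, Matrix.cons_val_zero]
      refine ⟨fun h => by rw [h] at hwf; simpa using hwf.1, fun a ha => ?_⟩
      have h1 : |a| = 1 := by
        have := hwf.1; have := hu.1
        have : ‖a • w‖ = 1 := by rw [ha]; exact hu.1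
        rwa [norm_smul, hwf.1, mul_one, Real.norm_eq_abs] at this
      have h2 : a = 1 := by
        have : φ (a • w) = 1 := by rw [ha]; exact hu.2
        rw [map_smul, smul_eq_mul, hwf.2, mul_one] at this
        exact this
      rw [h2, one_smul] at ha
      exact hwu ha
    have hspan : Submodule.span ℝ {u, w} = ⊤ := by
      have h1 : Module.finrank ℝ (Submodule.span ℝ (Set.range ![u, w])) = 2 := by
        rw [finrank_span_eq_card hindep]; simp
      have h2 : Set.range ![u, w] = {u, w} := by
        simp only [Matrix.range_cons, Matrix.range_empty, Set.union_empty,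
          Set.union_singleton]
        exact Set.pair_comm w u
      rw [h2] at h1
      exact Submodule.eq_top_of_finrank_eq (h1.trans hd.symm)
    have hdmem : d ∈ Submodule.span ℝ ({u, w} : Set X) := hspan ▸ Submodule.mem_top
    obtain ⟨a, b, hab⟩ := Submodule.mem_span_pair.mp hdmem
    refine ⟨(1 + |a| + |b|) • u + (1 + |a| + |b|) • w, cone_two hφ hu hwf (by positivity) (by positivity), ?_⟩
    have : (1 + |a| + |b|) • u + (1 + |a| + |b|) • w + d
        = (1 + |a| + |b| + a) • u + (1 + |a| + |b| + b) • w := by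
      rw [← hab]; module
    rw [this]
    refine cone_two hφ hu hwf ?_ ?_ <;>
      [have := abs_nonneg b; have := abs_nonneg a] <;>
      [have := neg_abs_le a; have := neg_abs_le b] <;> linarith

lemma nonunique_of_parallel (hd : Module.finrank ℝ X = 2) {n : ℕ}
    (φ : Fin n → (X →L[ℝ] ℝ)) (hφ : ∀ i, ‖φ i‖ = 1) (hsum : ∑ i, φ i = 0)
    (d : X) (hface : ∀ i, (face (φ i)).Nonempty)
    (hpt : ∀ i u, face (φ i) = {u} → ∃ c : ℝ, u = c • d) :
    ∃ x : Fin n → X, (0 : X) ∈ ft x ∧ d ∈ ft x := by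
  choose v hv1 hv2 using fun i => exists_v hd (hφ i) (hface i) d (hpt i)
  refine ⟨fun i => -v i, ?_, ?_⟩ <;> intro q
  · calc ∑ i, ‖(0:X) - -v i‖ = ∑ i, φ i (v i) := by
          refine Finset.sum_congr rfl fun i _ => ?_
          rw [zero_sub, neg_neg, hv1 i]
    _ = ∑ i, φ i (q - -v i) := by
          have : ∑ i, φ i (q - -v i) = (∑ i, φ i) q + ∑ i, φ i (v i) := by
            rw [ContinuousLinearMap.sum_apply, ← Finset.sum_add_distrib]
            refine Finset.sum_congr rfl fun i _ => ?_
            rw [sub_neg_eq_add, map_add]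
          rw [this, hsum]; simp
    _ ≤ ∑ i, ‖q - -v i‖ := by
          refine Finset.sum_le_sum fun i _ => ?_
          calc φ i (q - -v i) ≤ ‖φ i (q - -v i)‖ := le_abs_self _
          _ ≤ ‖φ i‖ * ‖q - -v i‖ := (φ i).le_opNorm _
          _ = ‖q - -v i‖ := by rw [hφ i, one_mul]
  · calc ∑ i, ‖d - -v i‖ = ∑ i, φ i (d - -v i) := by
          refine Finset.sum_congr rfl fun i _ => ?_
          rw [sub_neg_eq_add, add_comm, ← hv2 i]
    _ = ∑ i, φ i (q - -v i) := by
          have h1 : ∑ i, φ i (d - -v i) = (∑ i, φ i) d + ∑ i, φ i (v i) := by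
            rw [ContinuousLinearMap.sum_apply, ← Finset.sum_add_distrib]
            refine Finset.sum_congr rfl fun i _ => ?_
            rw [sub_neg_eq_add, add_comm, map_add, add_comm]
          have h2 : ∑ i, φ i (q - -v i) = (∑ i, φ i) q + ∑ i, φ i (v i) := by
            rw [ContinuousLinearMap.sum_apply, ← Finset.sum_add_distrib]
            refine Finset.sum_congr rfl fun i _ => ?_
            rw [sub_neg_eq_add, map_add]
          rw [h1, h2, hsum]; simp
    _ ≤ ∑ i, ‖q - -v i‖ := by
          refine Finset.sum_le_sum fun i _ => ?_
          calc φ i (q - -v i) ≤ ‖φ i (q - -v i)‖ := le_abs_self _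
          _ ≤ ‖φ i‖ * ‖q - -v i‖ := (φ i).le_opNorm _
          _ = ‖q - -v i‖ := by rw [hφ i, one_mul]



-- glue for direction 1→2 : find a common line
lemma exists_parallel_line (hd : Module.finrank ℝ X = 2) {n : ℕ} (hn : 3 ≤ n)
    (φ : Fin n → (X →L[ℝ] ℝ))
    (hc : ¬ ({i : Fin n | ∃ u v : X, u ≠ v ∧ u ∈ face (φ i) ∧ v ∈ face (φ i)}.ncard ≤ n - 2 ∧
          Submodule.span ℝ
            (⋃ i ∈ {i : Fin n | ∃ u : X, face (φ i) = {u}}, face (φ i)) = ⊤)) :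
    ∃ d : X, d ≠ 0 ∧ ∀ i u, face (φ i) = {u} → ∃ c : ℝ, u = c • d := by
  have : FiniteDimensional ℝ X := FiniteDimensional.of_finrank_eq_succ hd
  have : Nontrivial X := Module.nontrivial_of_finrank_pos (by omega : 0 < finrank ℝ X)
  set Flat := {i : Fin n | ∃ u v : X, u ≠ v ∧ u ∈ face (φ i) ∧ v ∈ face (φ i)} with hFlat
  set Pt := {i : Fin n | ∃ u : X, face (φ i) = {u}} with hPt
  rcases not_and_or.mp hc with hA | hB
  · -- many flattenings ⇒ at most one point-face
    have hdisj : Disjoint Flat Pt := by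
      rw [Set.disjoint_left]
      rintro i ⟨a, b, hab, ha, hb⟩ ⟨u, hu⟩
      rw [hu] at ha hb
      exact hab (ha.trans hb.symm)
    have hcard : Flat.ncard + Pt.ncard ≤ n := by
      rw [← Set.ncard_union_eq hdisj (Set.toFinite _) (Set.toFinite _)]
      calc (Flat ∪ Pt).ncard ≤ (Set.univ : Set (Fin n)).ncard :=
            Set.ncard_le_ncard (Set.subset_univ _) Set.finite_univ
      _ = n := by rw [Set.ncard_univ]; simp
    have hFlge : n - 2 < Flat.ncard := not_le.mp hA
    have hPt1 : Pt.ncard ≤ 1 := by omega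
    rcases Set.eq_empty_or_nonempty Pt with hPe | ⟨i₀, hi₀⟩
    · obtain ⟨d, hd0⟩ := exists_ne (0 : X)
      refine ⟨d, hd0, fun i u hfu => absurd (Set.mem_setOf.mpr ⟨u, hfu⟩ : i ∈ Pt) (by rw [show ({i | ∃ u, face (φ i) = {u}} : Set (Fin n)) = Pt from rfl, hPe]; exact Set.notMem_empty i)⟩
    · obtain ⟨u₀, hu₀⟩ := hi₀
      have hu₀0 : u₀ ≠ 0 := by
        have : u₀ ∈ face (φ i₀) := hu₀ ▸ rfl
        intro h; rw [h] at this; simpa using this.1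
      refine ⟨u₀, hu₀0, fun i u hfu => ?_⟩
      have hiPt : i ∈ Pt := ⟨u, hfu⟩
      have hii : i = i₀ := by
        by_contra hne
        have : ({i, i₀} : Set (Fin n)).ncard ≤ Pt.ncard :=
          Set.ncard_le_ncard (by rintro j (rfl | rfl); exacts [hiPt, ⟨u₀, hu₀⟩]) (Set.toFinite _)
        rw [Set.ncard_pair hne] at this
        omega
      subst hii
      have : u = u₀ := by
        have := hfu.symm.trans hu₀
        exact Set.singleton_eq_singleton_iff.mp this
      exact ⟨1, by rw [this, one_smul]⟩
  · -- point faces do not span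
    set S := Submodule.span ℝ (⋃ i ∈ Pt, face (φ i)) with hS
    have hfr : finrank ℝ S ≤ 1 := by
      by_contra hfr
      push_neg at hfr
      have h2' : finrank ℝ S ≤ 2 := hd ▸ Submodule.finrank_le S
      exact hB (Submodule.eq_top_of_finrank_eq (by omega))
    rcases Set.eq_empty_or_nonempty Pt with hPe | ⟨i₀, hi₀⟩
    · obtain ⟨d, hd0⟩ := exists_ne (0 : X)
      refine ⟨d, hd0, fun i u hfu => absurd (Set.mem_setOf.mpr ⟨u, hfu⟩ : i ∈ Pt) (by rw [show ({i | ∃ u, face (φ i) = {u}} : Set (Fin n)) = Pt from rfl, hPe]; exact Set.notMem_empty i)⟩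
    · obtain ⟨u₀, hu₀⟩ := hi₀
      have hu₀f : u₀ ∈ face (φ i₀) := hu₀ ▸ rfl
      have hu₀0 : u₀ ≠ 0 := fun h => by rw [h] at hu₀f; simpa using hu₀f.1
      have hmemS : ∀ j u, face (φ j) = {u} → u ∈ S := by
        intro j u hfu
        refine Submodule.subset_span ?_
        exact Set.mem_biUnion (⟨u, hfu⟩ : j ∈ Pt) (hfu ▸ rfl)
      have hu₀S : u₀ ∈ S := hmemS i₀ u₀ hu₀
      refine ⟨u₀, hu₀0, fun i u hfu => ?_⟩
      have huS : u ∈ S := hmemS i u hfu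
      by_contra hcon
      push_neg at hcon
      have hindep : LinearIndependent ℝ ![u, u₀] := by
        rw [linearIndependent_fin2]
        simp only [Matrix.cons_val_one, Matrix.head_cons, Matrix.cons_val_zero]
        exact ⟨hu₀0, fun a ha => hcon a ha.symm⟩
      have hsub : Submodule.span ℝ (Set.range ![u, u₀]) ≤ S := by
        rw [Submodule.span_le]
        rintro z hz
        simp only [Matrix.range_cons, Matrix.range_empty, Set.union_empty,
          Set.union_singleton, Set.mem_insert_iff, Set.mem_singleton_iff] at hz
        rcases hz with rfl | rfl
        exacts [hu₀S, huS]
      have := Submodule.finrank_mono hsub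
      rw [finrank_span_eq_card hindep] at this
      simp at this
      omega

lemma support_limit [FiniteDimensional ℝ X] {n : ℕ} (hn : 0 < n) (x : Fin n → X) (m : X)
    (hm : m ∈ ft x) (hv : ∀ i, m - x i ≠ 0) (e : X) :
    ∃ Ψ : Fin n → (X →L[ℝ] ℝ), (∀ i, ‖Ψ i‖ ≤ 1 ∧ Ψ i (m - x i) = ‖m - x i‖) ∧
      0 ≤ ∑ i, Ψ i e := by
  have hne : (Finset.univ : Finset (Fin n)).Nonempty := ⟨⟨0, hn⟩, Finset.mem_univ _⟩
  set r : ℝ := Finset.univ.inf' hne (fun i => ‖m - x i‖) with hr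
  have hr0 : 0 < r := by
    rw [hr, Finset.lt_inf'_iff]
    exact fun i _ => norm_pos_iff.mpr (hv i)
  set ε : ℕ → ℝ := fun k => r / (2 * (‖e‖ + 1) * (k + 1)) with hε
  have hε0 : ∀ k, 0 < ε k := by
    intro k
    apply div_pos hr0
    positivity
  have hεe : ∀ k, ε k * ‖e‖ < r := by
    intro k
    have h1 : ε k * ‖e‖ ≤ r / (2 * (‖e‖ + 1)) * ‖e‖ := by
      apply mul_le_mul_of_nonneg_right _ (norm_nonneg e)
      rw [hε]
      apply div_le_div_of_nonneg_left hr0.le (by positivity)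
      nlinarith [norm_nonneg e, (Nat.cast_nonneg k : (0:ℝ) ≤ k)]
    have h2 : r / (2 * (‖e‖ + 1)) * ‖e‖ < r := by
      rw [div_mul_eq_mul_div, div_lt_iff₀ (by positivity)]
      nlinarith [norm_nonneg e]
    linarith
  have hεlim : Tendsto ε atTop (nhds 0) := by
    have : ε = fun k : ℕ => r / (2 * (‖e‖ + 1)) * (1 / (k + 1)) := by
      funext k; rw [hε]; field_simp
    rw [this]
    simpa using tendsto_one_div_add_atTop_nhds_zero_nat.const_mul (r / (2 * (‖e‖ + 1)))
  have hvne : ∀ k i, m - x i + ε k • e ≠ 0 := by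
    intro k i
    have h1 : ‖ε k • e‖ < r := by
      rw [norm_smul, Real.norm_eq_abs, abs_of_pos (hε0 k)]; exact hεe k
    have h2 : r ≤ ‖m - x i‖ := Finset.inf'_le _ (Finset.mem_univ i)
    intro h
    have h3 : m - x i = -(ε k • e) := by
      have := congrArg (fun z => z - ε k • e) h
      simpa [sub_eq_iff_eq_add] using this
    rw [h3, norm_neg] at h2
    linarith
  choose ψ hψn hψv using fun k i => exists_dual_vector_real (m - x i + ε k • e) (hvne k i)
  have hpos : ∀ k, 0 ≤ ∑ i, ψ k i e := by
    intro k
    have key : ∀ i, ‖m - x i + ε k • e‖ - ‖m - x i‖ ≤ ε k * ψ k i e := by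
      intro i
      have h1 : ψ k i (m - x i) ≤ ‖m - x i‖ := by
        calc ψ k i (m - x i) ≤ ‖ψ k i (m - x i)‖ := le_abs_self _
        _ ≤ ‖ψ k i‖ * ‖m - x i‖ := (ψ k i).le_opNorm _
        _ = ‖m - x i‖ := by rw [hψn k i, one_mul]
      have h2 : ψ k i (m - x i) + ε k * ψ k i e = ‖m - x i + ε k • e‖ := by
        rw [← hψv k i, map_add, map_smul, smul_eq_mul]
      linarith
    have hsum2 : ∑ i, ‖m - x i‖ ≤ ∑ i, ‖m - x i + ε k • e‖ := by
      have := hm (m + ε k • e)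
      refine this.trans (le_of_eq (Finset.sum_congr rfl fun i _ => ?_))
      rw [add_sub_right_comm]
    have : ∑ i, (‖m - x i + ε k • e‖ - ‖m - x i‖) ≤ ∑ i, ε k * ψ k i e :=
      Finset.sum_le_sum fun i _ => key i
    rw [Finset.sum_sub_distrib, ← Finset.mul_sum] at this
    have h3 : 0 ≤ ε k * ∑ i, ψ k i e := by linarith
    exact nonneg_of_mul_nonneg_right h3 (hε0 k)
  have hball : ∀ k, (fun i => ψ k i) ∈ Metric.closedBall (0 : Fin n → X →L[ℝ] ℝ) 1 := by
    intro k
    rw [mem_closedBall_zero_iff]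
    exact (pi_norm_le_iff_of_nonneg zero_le_one).mpr fun i => (hψn k i).le
  obtain ⟨Ψ, hΨmem, σ, hσmono, hσtend⟩ :=
    (isCompact_closedBall (0 : Fin n → X →L[ℝ] ℝ) 1).tendsto_subseq hball
  have heval : ∀ (i : Fin n) (z : X),
      Tendsto (fun k => ψ (σ k) i z) atTop (nhds (Ψ i z)) := by
    intro i z
    have hcont : Continuous (fun g : Fin n → X →L[ℝ] ℝ => g i z) :=
      (ContinuousLinearMap.apply ℝ ℝ z).continuous.comp (continuous_apply i)
    exact (hcont.tendsto Ψ).comp hσtend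
  have hεσ : Tendsto (fun k => ε (σ k)) atTop (nhds 0) :=
    hεlim.comp hσmono.tendsto_atTop
  refine ⟨Ψ, fun i => ⟨?_, ?_⟩, ?_⟩
  · have : ‖Ψ‖ ≤ 1 := mem_closedBall_zero_iff.mp hΨmem
    exact (norm_le_pi_norm Ψ i).trans this
  · have htend2 : Tendsto (fun k => ψ (σ k) i (m - x i)) atTop (nhds ‖m - x i‖) := by
      have hrw : ∀ k, ψ (σ k) i (m - x i)
          = ‖m - x i + ε (σ k) • e‖ - ε (σ k) * ψ (σ k) i e := by
        intro k
        rw [← hψv (σ k) i, map_add, map_smul, smul_eq_mul]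
        ring
      simp only [hrw]
      have t1 : Tendsto (fun k => ‖m - x i + ε (σ k) • e‖) atTop (nhds ‖m - x i‖) := by
        have hc : Continuous (fun t : ℝ => ‖m - x i + t • e‖) :=
          (continuous_const.add (continuous_id.smul continuous_const)).norm
        have := (hc.tendsto 0).comp hεσ
        simpa [Function.comp_def] using this
      have t2 : Tendsto (fun k => ε (σ k) * ψ (σ k) i e) atTop (nhds 0) := by
        apply squeeze_zero_norm (a := fun k => ε (σ k) * ‖e‖)
        · intro k
          rw [Real.norm_eq_abs, abs_mul, abs_of_pos (hε0 (σ k))]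
          apply mul_le_mul_of_nonneg_left _ (hε0 (σ k)).le
          calc |ψ (σ k) i e| ≤ ‖ψ (σ k) i‖ * ‖e‖ := (ψ (σ k) i).le_opNorm e
          _ = ‖e‖ := by rw [hψn (σ k) i, one_mul]
        · simpa using hεσ.mul_const ‖e‖
      simpa using t1.sub t2
    exact tendsto_nhds_unique (heval i (m - x i)) htend2
  · have htend3 : Tendsto (fun k => ∑ i, ψ (σ k) i e) atTop (nhds (∑ i, Ψ i e)) :=
      tendsto_finset_sum _ fun i _ => heval i e
    exact ge_of_tendsto' htend3 (fun k => hpos (σ k))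


lemma sum_eq_zero_of_basis (hd : Module.finrank ℝ X = 2) [FiniteDimensional ℝ X]
    {d e : X} (hd0 : d ≠ 0) (he : e ∉ Submodule.span ℝ ({d} : Set X))
    (S : X →L[ℝ] ℝ) (hSd : S d = 0) (hSe : S e = 0) : S = 0 := by
  have hindep : LinearIndependent ℝ ![e, d] := by
    rw [linearIndependent_fin2]
    simp only [Matrix.cons_val_one, Matrix.head_cons, Matrix.cons_val_zero]
    exact ⟨hd0, fun a ha => he (ha ▸ Submodule.smul_mem _ a (Submodule.mem_span_singleton_self d))⟩
  have hspan : Submodule.span ℝ ({e, d} : Set X) = ⊤ := by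
    have h1 : Module.finrank ℝ (Submodule.span ℝ (Set.range ![e, d])) = 2 := by
      rw [finrank_span_eq_card hindep]; simp
    have h2 : Set.range ![e, d] = {e, d} := by
      simp only [Matrix.range_cons, Matrix.range_empty, Set.union_empty, Set.union_singleton]
      exact Set.pair_comm d e
    rw [h2] at h1
    exact Submodule.eq_top_of_finrank_eq (h1.trans hd.symm)
  ext z
  have hz : z ∈ Submodule.span ℝ ({e, d} : Set X) := hspan ▸ Submodule.mem_top
  simp only [ContinuousLinearMap.zero_apply]
  induction hz using Submodule.span_induction with
  | mem w hw => rcases hw with rfl | rfl; exacts [hSe, hSd]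
  | zero => simp
  | add a b _ _ ha hb => rw [map_add, ha, hb, add_zero]
  | smul c a _ ha => rw [map_smul, ha, smul_zero]

lemma exists_consistent [FiniteDimensional ℝ X] (hd : Module.finrank ℝ X = 2) {n : ℕ}
    (hn : 0 < n) (x : Fin n → X) (p q : X) (hp : p ∈ ft x) (hq : q ∈ ft x) (hpq : p ≠ q) :
    ∃ φ : Fin n → (X →L[ℝ] ℝ), (∀ i, ‖φ i‖ = 1) ∧ (∑ i, φ i) = 0 ∧
      ∀ i, φ i (p - x i) = ‖p - x i‖ ∧ φ i (q - x i) = ‖q - x i‖ := by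
  set m : X := (2:ℝ)⁻¹ • (p + q) with hm
  have hmz : ∀ z : X, m - z = (2:ℝ)⁻¹ • ((p - z) + (q - z)) := by
    intro z; rw [hm]; module
  have hfq : ∑ i, ‖q - x i‖ = ∑ i, ‖p - x i‖ := le_antisymm (hq p) (hp q)
  have htri : ∀ i, ‖m - x i‖ ≤ (‖p - x i‖ + ‖q - x i‖) / 2 := by
    intro i
    rw [hmz (x i), norm_smul]
    calc ‖(2:ℝ)⁻¹‖ * ‖p - x i + (q - x i)‖ ≤ ‖(2:ℝ)⁻¹‖ * (‖p - x i‖ + ‖q - x i‖) := by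
          apply mul_le_mul_of_nonneg_left (norm_add_le _ _) (norm_nonneg _)
    _ = (‖p - x i‖ + ‖q - x i‖) / 2 := by
          rw [Real.norm_eq_abs]; rw [abs_of_nonneg (by norm_num : (0:ℝ) ≤ 2⁻¹)]; ring
  have hsum_eq : ∑ i, ‖m - x i‖ = ∑ i, ((‖p - x i‖ + ‖q - x i‖) / 2) := by
    apply le_antisymm (Finset.sum_le_sum fun i _ => htri i)
    have h1 : ∑ i, ((‖p - x i‖ + ‖q - x i‖) / 2) = ∑ i, ‖p - x i‖ := by
      rw [← Finset.sum_div, Finset.sum_add_distrib, hfq]; ring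
    rw [h1]
    exact hp m
  have heq : ∀ i, ‖m - x i‖ = (‖p - x i‖ + ‖q - x i‖) / 2 :=
    fun i => (Finset.sum_eq_sum_iff_of_le (fun i _ => htri i)).mp hsum_eq i (Finset.mem_univ i)
  have hmft : m ∈ ft x := by
    intro z
    calc ∑ i, ‖m - x i‖ = ∑ i, ‖p - x i‖ := by
          rw [hsum_eq, ← Finset.sum_div, Finset.sum_add_distrib, hfq]; ring
    _ ≤ ∑ i, ‖z - x i‖ := hp z
  have hm0 : ∀ i, m - x i ≠ 0 := by
    intro i h
    have h1 : (0:ℝ) = (‖p - x i‖ + ‖q - x i‖) / 2 := by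
      rw [← heq i, h, norm_zero]
    have h2 : ‖p - x i‖ = 0 := by
      have := norm_nonneg (p - x i); have := norm_nonneg (q - x i); linarith
    have h3 : ‖q - x i‖ = 0 := by
      have := norm_nonneg (p - x i); have := norm_nonneg (q - x i); linarith
    rw [norm_eq_zero, sub_eq_zero] at h2 h3
    exact hpq (h2.trans h3.symm)
  -- the K-property
  have hK : ∀ (i : Fin n) (g : X →L[ℝ] ℝ), ‖g‖ ≤ 1 → g (m - x i) = ‖m - x i‖ →
      g (p - x i) = ‖p - x i‖ ∧ g (q - x i) = ‖q - x i‖ := by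
    intro i g hg1 hg2
    have ha : g (p - x i) ≤ ‖p - x i‖ := by
      calc g (p - x i) ≤ ‖g (p - x i)‖ := le_abs_self _
      _ ≤ ‖g‖ * ‖p - x i‖ := g.le_opNorm _
      _ ≤ ‖p - x i‖ := by nlinarith [norm_nonneg (p - x i)]
    have hb : g (q - x i) ≤ ‖q - x i‖ := by
      calc g (q - x i) ≤ ‖g (q - x i)‖ := le_abs_self _
      _ ≤ ‖g‖ * ‖q - x i‖ := g.le_opNorm _
      _ ≤ ‖q - x i‖ := by nlinarith [norm_nonneg (q - x i)]
    have hsum : g (p - x i) + g (q - x i) = ‖p - x i‖ + ‖q - x i‖ := by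
      have h1 : g (m - x i) = (2:ℝ)⁻¹ * (g (p - x i) + g (q - x i)) := by
        rw [hmz (x i), map_smul, map_add, smul_eq_mul]
      rw [h1, heq i] at hg2
      linarith
    exact ⟨by linarith, by linarith⟩
  -- pick e outside the line of d
  set d : X := q - p with hdd
  have hd0 : d ≠ 0 := sub_ne_zero.mpr (Ne.symm hpq)
  have he : ∃ e : X, e ∉ Submodule.span ℝ ({d} : Set X) := by
    by_contra h
    push_neg at h
    have : Submodule.span ℝ ({d} : Set X) = ⊤ := Submodule.eq_top_iff'.mpr h
    have h1 : Module.finrank ℝ (Submodule.span ℝ ({d} : Set X)) = 1 := finrank_span_singleton hd0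
    rw [this] at h1
    rw [finrank_top] at h1
    omega
  obtain ⟨e, he⟩ := he
  obtain ⟨Ψ, hΨ, hΨe⟩ := support_limit hn x m hmft hm0 e
  obtain ⟨Φ, hΦ, hΦe⟩ := support_limit hn x m hmft hm0 (-e)
  have hΦe' : ∑ i, Φ i e ≤ 0 := by
    have : ∑ i, Φ i (-e) = -∑ i, Φ i e := by
      rw [← Finset.sum_neg_distrib]
      exact Finset.sum_congr rfl fun i _ => by rw [map_neg]
    rw [this] at hΦe
    linarith
  set A := ∑ i, Φ i e with hA
  set B := ∑ i, Ψ i e with hB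
  -- choose t
  have ht : ∃ t : ℝ, 0 ≤ t ∧ t ≤ 1 ∧ (1 - t) * A + t * B = 0 := by
    rcases eq_or_lt_of_le hΦe' with hA0 | hA0
    · exact ⟨0, le_refl 0, zero_le_one, by rw [hA0]; ring⟩
    · have hBA : (0:ℝ) < B - A := by linarith
      refine ⟨(-A) / (B - A), div_nonneg (by linarith) hBA.le,
        (div_le_one hBA).mpr (by linarith), ?_⟩
      have hBA' : B - A ≠ 0 := ne_of_gt hBA
      field_simp
      ring
  obtain ⟨t, ht0, ht1, htsum⟩ := ht
  refine ⟨fun i => (1 - t) • Φ i + t • Ψ i, ?_, ?_, ?_⟩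
  · intro i
    have happ : ∀ z : X, ((1 - t) • Φ i + t • Ψ i) z = (1 - t) * Φ i z + t * Ψ i z := by
      intro z
      simp [ContinuousLinearMap.add_apply, ContinuousLinearMap.smul_apply, smul_eq_mul]
    have hle : ‖(1 - t) • Φ i + t • Ψ i‖ ≤ 1 := by
      calc ‖(1 - t) • Φ i + t • Ψ i‖ ≤ ‖(1 - t) • Φ i‖ + ‖t • Ψ i‖ := norm_add_le _ _
      _ = |1 - t| * ‖Φ i‖ + |t| * ‖Ψ i‖ := by
            rw [norm_smul (1 - t) (Φ i), norm_smul t (Ψ i), Real.norm_eq_abs, Real.norm_eq_abs]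
      _ ≤ |1 - t| * 1 + |t| * 1 := by
            have := (hΦ i).1; have := (hΨ i).1
            have h1 : (0:ℝ) ≤ |1 - t| := abs_nonneg _
            have h2 : (0:ℝ) ≤ |t| := abs_nonneg _
            gcongr <;> assumption
      _ = 1 := by rw [abs_of_nonneg (by linarith : (0:ℝ) ≤ 1 - t), abs_of_nonneg ht0]; ring
    have hval : ((1 - t) • Φ i + t • Ψ i) (m - x i) = ‖m - x i‖ := by
      rw [happ, (hΦ i).2, (hΨ i).2]; ring
    have hmn : 0 < ‖m - x i‖ := norm_pos_iff.mpr (hm0 i)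
    have hge : 1 ≤ ‖(1 - t) • Φ i + t • Ψ i‖ := by
      have h1 := ((1 - t) • Φ i + t • Ψ i).le_opNorm (m - x i)
      rw [hval, Real.norm_eq_abs, abs_of_nonneg (norm_nonneg _)] at h1
      nlinarith
    linarith
  · -- sum is zero
    set S : X →L[ℝ] ℝ := ∑ i, ((1 - t) • Φ i + t • Ψ i) with hS
    have hSe : S e = 0 := by
      rw [hS, ContinuousLinearMap.sum_apply]
      have : ∀ i, ((1 - t) • Φ i + t • Ψ i) e = (1 - t) * Φ i e + t * Ψ i e := by
        intro i; simp [smul_eq_mul]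
      rw [Finset.sum_congr rfl fun i _ => this i, Finset.sum_add_distrib,
        ← Finset.mul_sum, ← Finset.mul_sum]
      exact htsum
    have hSd : S d = 0 := by
      rw [hS, ContinuousLinearMap.sum_apply]
      have hdi : ∀ i : Fin n, d = (q - x i) - (p - x i) := by intro i; rw [hdd]; abel
      have : ∀ i : Fin n, ((1 - t) • Φ i + t • Ψ i) d = ‖q - x i‖ - ‖p - x i‖ := by
        intro i
        have hΦK := hK i (Φ i) (hΦ i).1 (hΦ i).2
        have hΨK := hK i (Ψ i) (hΨ i).1 (hΨ i).2
        have e1 : (Φ i) ((q - x i) - (p - x i)) = ‖q - x i‖ - ‖p - x i‖ := by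
          rw [map_sub, hΦK.1, hΦK.2]
        have e2 : (Ψ i) ((q - x i) - (p - x i)) = ‖q - x i‖ - ‖p - x i‖ := by
          rw [map_sub, hΨK.1, hΨK.2]
        rw [hdi i]
        simp only [ContinuousLinearMap.add_apply, ContinuousLinearMap.smul_apply,
          smul_eq_mul, e1, e2]
        ring
      rw [Finset.sum_congr rfl fun i _ => this i, Finset.sum_sub_distrib, hfq]
      ring
    exact sum_eq_zero_of_basis hd hd0 he S hSd hSe
  · intro i
    have hΦK := hK i (Φ i) (hΦ i).1 (hΦ i).2
    have hΨK := hK i (Ψ i) (hΨ i).1 (hΨ i).2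
    constructor <;>
      simp only [ContinuousLinearMap.add_apply, ContinuousLinearMap.smul_apply, smul_eq_mul,
        hΦK.1, hΦK.2, hΨK.1, hΨK.2] <;> ring

end AuxFT

/-- Uniqueness criterion on a Minkowski plane for an odd number of points: the
Fermat–Torricelli set is a single point for every choice of `n` points iff every
consistent set of `n` faces of the unit circle contains at most `n - 2` flattenings and
the point-faces in it together span the whole plane. -/
theorem ft_unique_odd_plane_iff
    {X : Type*} [NormedAddCommGroup X] [NormedSpace ℝ X]
    (hd : Module.finrank ℝ X = 2)
    {n : ℕ} (hn : 3 ≤ n) (hodd : Odd n) :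
    (∀ x : Fin n → X, ∃ p : X, ft x = {p}) ↔
      (∀ φ : Fin n → (X →L[ℝ] ℝ), (∀ i, ‖φ i‖ = 1) → ∑ i, φ i = 0 →
        ({i : Fin n | ∃ u v : X, u ≠ v ∧ u ∈ face (φ i) ∧ v ∈ face (φ i)}.ncard ≤ n - 2 ∧
          Submodule.span ℝ
            (⋃ i ∈ {i : Fin n | ∃ u : X, face (φ i) = {u}}, face (φ i)) = ⊤)) := by
  have hFD : FiniteDimensional ℝ X := FiniteDimensional.of_finrank_eq_succ hd
  have hNT : Nontrivial X := Module.nontrivial_of_finrank_pos (by omega : 0 < Module.finrank ℝ X)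
  constructor
  · intro h1 φ hφ hsum
    by_contra hc
    obtain ⟨d, hd0, hpt⟩ := exists_parallel_line hd hn φ hc
    have hface : ∀ i, (face (φ i)).Nonempty := fun i => face_nonempty (hφ i)
    obtain ⟨x, h0, hdm⟩ := nonunique_of_parallel hd φ hφ hsum d hface hpt
    obtain ⟨p, hp⟩ := h1 x
    rw [hp, Set.mem_singleton_iff] at h0 hdm
    exact hd0 (hdm.trans h0.symm)
  · intro h2 x
    obtain ⟨p, hp⟩ := ft_nonempty (by omega : 0 < n) x
    refine ⟨p, Set.eq_singleton_iff_unique_mem.mpr ⟨hp, fun q hq => ?_⟩⟩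
    by_contra hqp
    obtain ⟨φ, hφ1, hφ2, hφ3⟩ :=
      exists_consistent hd (by omega : 0 < n) x p q hp hq (fun h => hqp h.symm)
    obtain ⟨-, hspan⟩ := h2 φ hφ1 hφ2
    have hd0 : q - p ≠ 0 := sub_ne_zero.mpr hqp
    have hnormalize : ∀ (i : Fin n) (w : X), w ≠ 0 → φ i w = ‖w‖ →
        ‖w‖⁻¹ • w ∈ face (φ i) := by
      intro i w hw hval
      have hn0 : ‖w‖ ≠ 0 := norm_ne_zero_iff.mpr hw
      constructor
      · rw [norm_smul, Real.norm_eq_abs, abs_of_nonneg (inv_nonneg.mpr (norm_nonneg w)),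
          inv_mul_cancel₀ hn0]
      · rw [map_smul, smul_eq_mul, hval, inv_mul_cancel₀ hn0]
    have hsub : (⋃ i ∈ {i : Fin n | ∃ u : X, face (φ i) = {u}}, face (φ i)) ⊆
        (Submodule.span ℝ ({q - p} : Set X) : Set X) := by
      rintro z hz
      simp only [Set.mem_iUnion, Set.mem_setOf_eq] at hz
      obtain ⟨i, ⟨u, hu⟩, hzface⟩ := hz
      rw [hu, Set.mem_singleton_iff] at hzface
      rw [hzface]
      rcases eq_or_ne p (x i) with hpx | hpx
      · have hq0 : q - x i ≠ 0 := by rw [← hpx]; exact hd0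
        have hqf := hnormalize i (q - x i) hq0 (hφ3 i).2
        rw [hu, Set.mem_singleton_iff] at hqf
        rw [← hqf, ← hpx]
        exact Submodule.smul_mem _ _ (Submodule.mem_span_singleton_self _)
      · have hp0 : p - x i ≠ 0 := sub_ne_zero.mpr hpx
        have hpf := hnormalize i (p - x i) hp0 (hφ3 i).1
        rw [hu, Set.mem_singleton_iff] at hpf
        rcases eq_or_ne q (x i) with hqx | hqx
        · rw [← hpf, ← hqx]
          have hrw : p - q = (-1 : ℝ) • (q - p) := by module
          rw [hrw, smul_smul]
          exact Submodule.smul_mem _ _ (Submodule.mem_span_singleton_self _)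
        · have hq0 : q - x i ≠ 0 := sub_ne_zero.mpr hqx
          have hqf := hnormalize i (q - x i) hq0 (hφ3 i).2
          rw [hu, Set.mem_singleton_iff] at hqf
          have hpn : ‖p - x i‖ ≠ 0 := norm_ne_zero_iff.mpr hp0
          have hqn : ‖q - x i‖ ≠ 0 := norm_ne_zero_iff.mpr hq0
          have e1 : p - x i = ‖p - x i‖ • u := by
            rw [← hpf, smul_smul, mul_inv_cancel₀ hpn, one_smul]
          have e2 : q - x i = ‖q - x i‖ • u := by
            rw [← hqf, smul_smul, mul_inv_cancel₀ hqn, one_smul]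
          have e3 : q - p = (‖q - x i‖ - ‖p - x i‖) • u := by
            have : q - p = (q - x i) - (p - x i) := by abel
            rw [this, sub_smul, ← e1, ← e2]
          have hc0 : ‖q - x i‖ - ‖p - x i‖ ≠ 0 := by
            intro h; exact hd0 (by rw [e3, h, zero_smul])
          have : u = (‖q - x i‖ - ‖p - x i‖)⁻¹ • (q - p) := by
            rw [e3, smul_smul, inv_mul_cancel₀ hc0, one_smul]
          rw [this]
          exact Submodule.smul_mem _ _ (Submodule.mem_span_singleton_self _)
    have hle := Submodule.span_le.mpr hsub
    rw [hspan] at hle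
    have htop : Submodule.span ℝ ({q - p} : Set X) = ⊤ := le_antisymm le_top hle
    have h1 := finrank_span_singleton (K := ℝ) hd0
    rw [htop, finrank_top] at h1
    omega
end

section
/- In the space ℝ³ equipped with the supremum norm ‖(x,y,z)‖ = max(|x|,|y|,|z|) (whose unit ball is a cube), there exist three points x_1, x_2, x_3 such that the Fermat–Torricelli set ft(x_1, x_2, x_3) contains at least two distinct points. -/
lemma norm3_eq {a b c r : ℝ} (hr : 0 ≤ r) (ha : |a| ≤ r) (hb : |b| ≤ r) (hc : |c| ≤ r)
    (i : Fin 3) (h : |(![a,b,c] : Fin 3 → ℝ) i| = r) : ‖(![a,b,c] : Fin 3 → ℝ)‖ = r := by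
  refine le_antisymm (pi_norm_le_iff_of_nonneg hr |>.2 ?_) ?_
  · intro j; fin_cases j <;> simpa
  · calc r = ‖(![a,b,c] : Fin 3 → ℝ) i‖ := h.symm
      _ ≤ _ := norm_le_pi_norm _ i

lemma cube_key (q : Fin 3 → ℝ) :
    (3:ℝ) ≤ ∑ i, ‖q - (![![1,0,0], ![-1,0,0], ![0,2,0]] : Fin 3 → Fin 3 → ℝ) i‖ := by
  simp only [Fin.sum_univ_three, Matrix.cons_val_zero, Matrix.cons_val_one, Matrix.head_cons,
    Matrix.cons_val_two, Matrix.tail_cons]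
  have h12 : (2:ℝ) ≤ ‖q - ![1,0,0]‖ + ‖q - ![-1,0,0]‖ := by
    have h := norm_sub_le (q - ![(1:ℝ),0,0]) (q - ![(-1:ℝ),0,0])
    rw [sub_sub_sub_cancel_left] at h
    have e : (![(-1:ℝ),0,0] - ![(1:ℝ),0,0] : Fin 3 → ℝ) = ![-2,0,0] := by
      funext i; fin_cases i <;> norm_num
    have n : ‖(![(-2:ℝ),0,0] : Fin 3 → ℝ)‖ = 2 :=
      norm3_eq (by norm_num) (by norm_num) (by norm_num) (by norm_num) 0 (by norm_num)
    rw [e, n] at h; linarith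
  have h13 : (2:ℝ) ≤ ‖q - ![1,0,0]‖ + ‖q - ![0,2,0]‖ := by
    have h := norm_sub_le (q - ![(1:ℝ),0,0]) (q - ![(0:ℝ),2,0])
    rw [sub_sub_sub_cancel_left] at h
    have e : (![(0:ℝ),2,0] - ![(1:ℝ),0,0] : Fin 3 → ℝ) = ![-1,2,0] := by
      funext i; fin_cases i <;> norm_num
    have n : ‖(![(-1:ℝ),2,0] : Fin 3 → ℝ)‖ = 2 :=
      norm3_eq (by norm_num) (by norm_num) (by norm_num) (by norm_num) 1 (by norm_num)
    rw [e, n] at h; linarith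
  have h23 : (2:ℝ) ≤ ‖q - ![-1,0,0]‖ + ‖q - ![0,2,0]‖ := by
    have h := norm_sub_le (q - ![(-1:ℝ),0,0]) (q - ![(0:ℝ),2,0])
    rw [sub_sub_sub_cancel_left] at h
    have e : (![(0:ℝ),2,0] - ![(-1:ℝ),0,0] : Fin 3 → ℝ) = ![1,2,0] := by
      funext i; fin_cases i <;> norm_num
    have n : ‖(![(1:ℝ),2,0] : Fin 3 → ℝ)‖ = 2 :=
      norm3_eq (by norm_num) (by norm_num) (by norm_num) (by norm_num) 1 (by norm_num)
    rw [e, n] at h; linarith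
  linarith

/-- In `ℝ³` with the supremum norm (unit ball a cube), there exist three points whose
Fermat–Torricelli set contains at least two distinct points. -/
theorem cube_norm_exists_nonunique_ft :
    ∃ x₁ x₂ x₃ : (Fin 3 → ℝ),
      ∃ a ∈ ft ![x₁, x₂, x₃], ∃ b ∈ ft ![x₁, x₂, x₃], a ≠ b := by
  refine ⟨![1,0,0], ![-1,0,0], ![0,2,0], ![0,1,0], ?_, ![0,1,1], ?_, ?_⟩
  · intro q
    refine le_trans (le_of_eq ?_) (cube_key q)
    simp only [Fin.sum_univ_three, Matrix.cons_val_zero, Matrix.cons_val_one, Matrix.head_cons,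
      Matrix.cons_val_two, Matrix.tail_cons]
    have e1 : (![0,1,0] - ![(1:ℝ),0,0] : Fin 3 → ℝ) = ![-1,1,0] := by
      funext i; fin_cases i <;> norm_num
    have e2 : (![0,1,0] - ![(-1:ℝ),0,0] : Fin 3 → ℝ) = ![1,1,0] := by
      funext i; fin_cases i <;> norm_num
    have e3 : (![0,1,0] - ![(0:ℝ),2,0] : Fin 3 → ℝ) = ![0,-1,0] := by
      funext i; fin_cases i <;> norm_num
    have n1 : ‖(![(-1:ℝ),1,0] : Fin 3 → ℝ)‖ = 1 :=
      norm3_eq (by norm_num) (by norm_num) (by norm_num) (by norm_num) 0 (by norm_num)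
    have n2 : ‖(![(1:ℝ),1,0] : Fin 3 → ℝ)‖ = 1 :=
      norm3_eq (by norm_num) (by norm_num) (by norm_num) (by norm_num) 0 (by norm_num)
    have n3 : ‖(![(0:ℝ),-1,0] : Fin 3 → ℝ)‖ = 1 :=
      norm3_eq (by norm_num) (by norm_num) (by norm_num) (by norm_num) 1 (by norm_num)
    rw [e1, e2, e3, n1, n2, n3]; norm_num
  · intro q
    refine le_trans (le_of_eq ?_) (cube_key q)
    simp only [Fin.sum_univ_three, Matrix.cons_val_zero, Matrix.cons_val_one, Matrix.head_cons,
      Matrix.cons_val_two, Matrix.tail_cons]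
    have e1 : (![0,1,1] - ![(1:ℝ),0,0] : Fin 3 → ℝ) = ![-1,1,1] := by
      funext i; fin_cases i <;> norm_num
    have e2 : (![0,1,1] - ![(-1:ℝ),0,0] : Fin 3 → ℝ) = ![1,1,1] := by
      funext i; fin_cases i <;> norm_num
    have e3 : (![0,1,1] - ![(0:ℝ),2,0] : Fin 3 → ℝ) = ![0,-1,1] := by
      funext i; fin_cases i <;> norm_num
    have n1 : ‖(![(-1:ℝ),1,1] : Fin 3 → ℝ)‖ = 1 :=
      norm3_eq (by norm_num) (by norm_num) (by norm_num) (by norm_num) 0 (by norm_num)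
    have n2 : ‖(![(1:ℝ),1,1] : Fin 3 → ℝ)‖ = 1 :=
      norm3_eq (by norm_num) (by norm_num) (by norm_num) (by norm_num) 0 (by norm_num)
    have n3 : ‖(![(0:ℝ),-1,1] : Fin 3 → ℝ)‖ = 1 :=
      norm3_eq (by norm_num) (by norm_num) (by norm_num) (by norm_num) 1 (by norm_num)
    rw [e1, e2, e3, n1, n2, n3]; norm_num
  · intro h
    have := congrFun h 2
    change (0:ℝ) = 1 at this
    norm_num at this
end
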